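/- arXiv:1406.1579 — 8 statements merged into one kernel-verified Lean document; each statement's English description precedes it below -/
import Mathlib

section
/- Let 𝕄, 𝕄_T, 𝕄_H be structured sparsity models on {1,…,n}, let 0 ≤ δ < 1 and 0 < c_H ≤ 1 be reals with α₀ := c_H(1−δ) − δ > 0, and set β₀ := (1+c_H)√(1+δ). Suppose A ∈ ℝ^{m×n} has the (δ, 𝕄 ⊕ 𝕄_T ⊕ 𝕄_H)-model-RIP. Let x, xⁱ ∈ ℝⁿ with supp(x) ∈ 𝕄⁺ and supp(xⁱ) ∈ 𝕄_T⁺, let e ∈ ℝᵐ, set r = x − xⁱ and b = Aᵀ(Ar + e). Let Γ ∈ 𝕄_H⁺ satisfy ‖b_Γ‖₂ ≥ c_H‖b_Ω‖₂ for every Ω ∈ 𝕄_T ⊕ 𝕄. Then ‖r_{Γᶜ}‖₂ ≤ √(1−α₀²)·‖r‖₂ + (β₀/α₀ + α₀β₀/√(1−α₀²))·‖e‖₂. -/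
/-- The ℓ₂ norm of a vector in ℝⁿ. -/
noncomputable def l2norm {k : ℕ} (x : Fin k → ℝ) : ℝ := Real.sqrt (∑ i, (x i) ^ 2)

/-- Restriction of a vector to a set of coordinates: agrees with `x` on `Ω`, zero elsewhere. -/
noncomputable def restr {k : ℕ} (x : Fin k → ℝ) (Ω : Set (Fin k)) : Fin k → ℝ := Ω.indicator x

/-- The closure of a structured sparsity model under taking subsets. -/
def modelPlus {k : ℕ} (M : Set (Set (Fin k))) : Set (Set (Fin k)) :=
  {Ω | ∃ S ∈ M, Ω ⊆ S}

/-- The sum of two structured sparsity models. -/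
def modelSum {k : ℕ} (M₁ M₂ : Set (Set (Fin k))) : Set (Set (Fin k)) :=
  {Ω | ∃ S₁ ∈ M₁, ∃ S₂ ∈ M₂, Ω = S₁ ∪ S₂}

/-- A matrix `A` has the `(δ, M)`-model-RIP. -/
def hasModelRIP {m n : ℕ} (A : Matrix (Fin m) (Fin n) ℝ) (δ : ℝ)
    (M : Set (Set (Fin n))) : Prop :=
  ∀ x : Fin n → ℝ, Function.support x ∈ modelPlus M →
    (1 - δ) * (l2norm x) ^ 2 ≤ (l2norm (A.mulVec x)) ^ 2 ∧
    (l2norm (A.mulVec x)) ^ 2 ≤ (1 + δ) * (l2norm x) ^ 2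

open Matrix

namespace SparseAux

lemma l2norm_zero {k : ℕ} : l2norm (0 : Fin k → ℝ) = 0 := by
  simp [l2norm]

lemma l2norm_nonneg {k : ℕ} (x : Fin k → ℝ) : 0 ≤ l2norm x := Real.sqrt_nonneg _

lemma l2norm_sq {k : ℕ} (x : Fin k → ℝ) : l2norm x ^ 2 = ∑ i, (x i) ^ 2 :=
  Real.sq_sqrt (Finset.sum_nonneg fun i _ => sq_nonneg _)

lemma l2norm_sq_eq_dot {k : ℕ} (x : Fin k → ℝ) : l2norm x ^ 2 = x ⬝ᵥ x := by
  rw [l2norm_sq]; simp [dotProduct, sq]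

lemma dot_le {k : ℕ} (x y : Fin k → ℝ) : x ⬝ᵥ y ≤ l2norm x * l2norm y :=
  Real.sum_mul_le_sqrt_mul_sqrt _ _ _

lemma l2norm_smul_sq {k : ℕ} (c : ℝ) (x : Fin k → ℝ) :
    l2norm (c • x) ^ 2 = c ^ 2 * l2norm x ^ 2 := by
  rw [l2norm_sq, l2norm_sq, Finset.mul_sum]
  refine Finset.sum_congr rfl fun i _ => by simp [mul_pow]

lemma l2norm_eq_zero {k : ℕ} {x : Fin k → ℝ} (h : l2norm x = 0) : x = 0 := by
  have h2 : l2norm x ^ 2 = 0 := by rw [h]; ring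
  rw [l2norm_sq] at h2
  funext i
  have := (Finset.sum_eq_zero_iff_of_nonneg (fun i _ => sq_nonneg (x i))).1 h2 i (Finset.mem_univ i)
  exact pow_eq_zero_iff (n := 2) (by norm_num) |>.1 this

lemma l2norm_split {k : ℕ} (x : Fin k → ℝ) (T : Set (Fin k)) :
    l2norm x ^ 2 = l2norm (restr x T) ^ 2 + l2norm (restr x Tᶜ) ^ 2 := by
  rw [l2norm_sq, l2norm_sq, l2norm_sq, ← Finset.sum_add_distrib]
  refine Finset.sum_congr rfl fun i _ => ?_
  by_cases h : i ∈ T <;> simp [restr, Set.indicator_apply, h]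

lemma support_restr {k : ℕ} (x : Fin k → ℝ) (T : Set (Fin k)) :
    Function.support (restr x T) ⊆ T := by
  intro i hi
  by_contra h
  simp [restr, Set.indicator_apply] at hi
  exact h hi.1

lemma support_restr' {k : ℕ} (x : Fin k → ℝ) (T : Set (Fin k)) :
    Function.support (restr x T) ⊆ Function.support x := by
  intro i hi
  simp only [restr, Function.mem_support, Set.indicator_apply] at hi ⊢
  by_cases h : i ∈ T <;> simp [h] at hi ⊢; exact hi

lemma dot_restr_of_support {k : ℕ} (x w : Fin k → ℝ) (T : Set (Fin k))
    (h : Function.support w ⊆ T) : x ⬝ᵥ w = restr x T ⬝ᵥ w := by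
  refine Finset.sum_congr rfl fun i _ => ?_
  by_cases hw : w i = 0
  · simp [hw]
  · have : i ∈ T := h hw
    simp [restr, Set.indicator_apply, this]

lemma rip_norm_le {m n : ℕ} {A : Matrix (Fin m) (Fin n) ℝ} {δ : ℝ}
    {MM : Set (Set (Fin n))} (hδ : 0 ≤ 1 + δ) (hA : hasModelRIP A δ MM)
    {U : Set (Fin n)} (hU : U ∈ MM) {v : Fin n → ℝ} (hv : Function.support v ⊆ U) :
    l2norm (A.mulVec v) ≤ Real.sqrt (1 + δ) * l2norm v := by
  have h := (hA v ⟨U, hU, hv⟩).2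
  have h1 : l2norm (A.mulVec v) = Real.sqrt (l2norm (A.mulVec v) ^ 2) :=
    (Real.sqrt_sq (l2norm_nonneg _)).symm
  rw [h1]
  have h2 : Real.sqrt ((1 + δ) * l2norm v ^ 2) = Real.sqrt (1 + δ) * l2norm v := by
    rw [Real.sqrt_mul hδ, Real.sqrt_sq (l2norm_nonneg _)]
  rw [← h2]
  exact Real.sqrt_le_sqrt h

lemma rip_cross_half {m n : ℕ} {A : Matrix (Fin m) (Fin n) ℝ} {δ : ℝ}
    {MM : Set (Set (Fin n))} (hA : hasModelRIP A δ MM)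
    {U : Set (Fin n)} (hU : U ∈ MM) {v w : Fin n → ℝ}
    (hv : Function.support v ⊆ U) (hw : Function.support w ⊆ U) :
    (A.mulVec v) ⬝ᵥ (A.mulVec w) ≤ v ⬝ᵥ w + δ / 2 * (l2norm v ^ 2 + l2norm w ^ 2) := by
  have hadd : Function.support (v + w) ⊆ U :=
    (Function.support_add v w).trans (Set.union_subset hv hw)
  have hsub : Function.support (v - w) ⊆ U :=
    (Function.support_sub v w).trans (Set.union_subset hv hw)
  have h1 := (hA _ ⟨U, hU, hadd⟩).2
  have h2 := (hA _ ⟨U, hU, hsub⟩).1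
  rw [l2norm_sq_eq_dot, l2norm_sq_eq_dot, Matrix.mulVec_add] at h1
  rw [l2norm_sq_eq_dot, l2norm_sq_eq_dot, Matrix.mulVec_sub] at h2
  rw [l2norm_sq_eq_dot, l2norm_sq_eq_dot]
  have e1 : ∀ a c : Fin m → ℝ, (a + c) ⬝ᵥ (a + c) = a ⬝ᵥ a + 2 * (a ⬝ᵥ c) + c ⬝ᵥ c := by
    intro a c
    rw [add_dotProduct, dotProduct_add, dotProduct_add,
      dotProduct_comm c a]; ring
  have e2 : ∀ a c : Fin m → ℝ, (a - c) ⬝ᵥ (a - c) = a ⬝ᵥ a - 2 * (a ⬝ᵥ c) + c ⬝ᵥ c := by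
    intro a c
    rw [sub_dotProduct, dotProduct_sub, dotProduct_sub,
      dotProduct_comm c a]; ring
  have e1' : ∀ a c : Fin n → ℝ, (a + c) ⬝ᵥ (a + c) = a ⬝ᵥ a + 2 * (a ⬝ᵥ c) + c ⬝ᵥ c := by
    intro a c
    rw [add_dotProduct, dotProduct_add, dotProduct_add,
      dotProduct_comm c a]; ring
  have e2' : ∀ a c : Fin n → ℝ, (a - c) ⬝ᵥ (a - c) = a ⬝ᵥ a - 2 * (a ⬝ᵥ c) + c ⬝ᵥ c := by
    intro a c
    rw [sub_dotProduct, dotProduct_sub, dotProduct_sub,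
      dotProduct_comm c a]; ring
  rw [e1, e1'] at h1
  rw [e2, e2'] at h2
  linarith only [h1, h2]

lemma support_smul₀ {k : ℕ} (c : ℝ) (v : Fin k → ℝ) :
    Function.support (c • v) ⊆ Function.support v := by
  intro i hi
  simp only [Function.mem_support, Pi.smul_apply, smul_eq_mul] at hi ⊢
  intro h; exact hi (by rw [h]; ring)

lemma rip_cross {m n : ℕ} {A : Matrix (Fin m) (Fin n) ℝ} {δ : ℝ}
    {MM : Set (Set (Fin n))} (hA : hasModelRIP A δ MM)
    {U : Set (Fin n)} (hU : U ∈ MM) {v w : Fin n → ℝ}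
    (hv : Function.support v ⊆ U) (hw : Function.support w ⊆ U) :
    (A.mulVec v) ⬝ᵥ (A.mulVec w) ≤ v ⬝ᵥ w + δ * (l2norm v * l2norm w) := by
  rcases eq_or_lt_of_le (l2norm_nonneg v) with hv0 | hv0
  · have : v = 0 := l2norm_eq_zero hv0.symm
    subst this
    simp [Matrix.mulVec_zero, zero_dotProduct, l2norm_zero]
  rcases eq_or_lt_of_le (l2norm_nonneg w) with hw0 | hw0
  · have : w = 0 := l2norm_eq_zero hw0.symm
    subst this
    simp [Matrix.mulVec_zero, dotProduct_zero, l2norm_zero]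
  set a := l2norm v with ha
  set c := l2norm w with hc
  have hv' : Function.support (c • v) ⊆ U := (support_smul₀ c v).trans hv
  have hw' : Function.support (a • w) ⊆ U := (support_smul₀ a w).trans hw
  have h := rip_cross_half hA hU hv' hw'
  rw [Matrix.mulVec_smul, Matrix.mulVec_smul, smul_dotProduct,
    dotProduct_smul, smul_dotProduct, dotProduct_smul,
    l2norm_smul_sq, l2norm_smul_sq] at h
  simp only [smul_eq_mul, ← ha, ← hc] at h
  -- h : c * (a * (Av ⬝ᵥ Aw)) ≤ c * (a * (v ⬝ᵥ w)) + δ/2 * (c^2*a^2 + a^2*c^2)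
  have hac : 0 < a * c := mul_pos hv0 hw0
  nlinarith only [h, hac]

end SparseAux


open SparseAux Matrix in
set_option maxHeartbeats 1000000 in
theorem stmt0 {n m : ℕ}
    (M MT MH : Set (Set (Fin n)))
    (δ cH : ℝ) (hδ0 : 0 ≤ δ) (hδ1 : δ < 1) (hcH0 : 0 < cH) (hcH1 : cH ≤ 1)
    (α₀ β₀ : ℝ) (hα₀ : α₀ = cH * (1 - δ) - δ) (hα₀pos : 0 < α₀)
    (hβ₀ : β₀ = (1 + cH) * Real.sqrt (1 + δ))
    (A : Matrix (Fin m) (Fin n) ℝ)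
    (hA : hasModelRIP A δ (modelSum (modelSum M MT) MH))
    (x xi : Fin n → ℝ)
    (hx : Function.support x ∈ modelPlus M)
    (hxi : Function.support xi ∈ modelPlus MT)
    (e : Fin m → ℝ)
    (r : Fin n → ℝ) (hr : r = x - xi)
    (b : Fin n → ℝ) (hb : b = A.transpose.mulVec (A.mulVec r + e))
    (Γ : Set (Fin n)) (hΓ : Γ ∈ modelPlus MH)
    (hhead : ∀ Ω ∈ modelSum MT M, l2norm (restr b Γ) ≥ cH * l2norm (restr b Ω)) :
    l2norm (restr r Γᶜ) ≤ Real.sqrt (1 - α₀ ^ 2) * l2norm r +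
      (β₀ / α₀ + α₀ * β₀ / Real.sqrt (1 - α₀ ^ 2)) * l2norm e := by
  classical
  obtain ⟨S, hS, hxS⟩ := hx
  obtain ⟨S', hS', hxiS'⟩ := hxi
  obtain ⟨SH, hSH, hΓSH⟩ := hΓ
  set U : Set (Fin n) := (S ∪ S') ∪ SH with hUdef
  have hU : U ∈ modelSum (modelSum M MT) MH := ⟨S ∪ S', ⟨S, hS, S', hS', rfl⟩, SH, hSH, rfl⟩
  set Ω : Set (Fin n) := S' ∪ S with hΩdef
  have hΩmem : Ω ∈ modelSum MT M := ⟨S', hS', S, hS, rfl⟩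
  have hΩU : Ω ⊆ U := by
    intro i hi
    rcases hi with h | h
    · exact Or.inl (Or.inr h)
    · exact Or.inl (Or.inl h)
  have hΓU : Γ ⊆ U := hΓSH.trans (fun i hi => Or.inr hi)
  have hrsupp : Function.support r ⊆ Ω := by
    intro i hi
    by_contra hiΩ
    simp only [hΩdef, Set.mem_union, not_or] at hiΩ
    have hx0 : x i = 0 := by
      by_contra h; exact hiΩ.2 (hxS h)
    have hxi0 : xi i = 0 := by
      by_contra h; exact hiΩ.1 (hxiS' h)
    exact hi (by rw [hr]; simp [hx0, hxi0])
  have hrU : Function.support r ⊆ U := hrsupp.trans hΩU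
  set E := Real.sqrt (1 + δ) with hEdef
  have h1δ : (0:ℝ) ≤ 1 + δ := by linarith
  have hE0 : 0 ≤ E := Real.sqrt_nonneg _
  set R := l2norm r with hRdef
  set ε := l2norm e with hεdef
  set t := l2norm (restr r Γ) with htdef
  set s := l2norm (restr r Γᶜ) with hsdef
  set G := l2norm (restr b Γ) with hGdef
  set BΩ := l2norm (restr b Ω) with hBΩdef
  have hR0 : 0 ≤ R := l2norm_nonneg _
  have hε0 : 0 ≤ ε := l2norm_nonneg _
  have ht0 : 0 ≤ t := l2norm_nonneg _
  have hs0 : 0 ≤ s := l2norm_nonneg _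
  have hG0 : 0 ≤ G := l2norm_nonneg _
  have hBΩ0 : 0 ≤ BΩ := l2norm_nonneg _
  have hβ₀0 : 0 ≤ β₀ := by
    rw [hβ₀]
    exact mul_nonneg (by linarith) hE0
  -- basic dot product identity for b
  have hbdot : ∀ w : Fin n → ℝ, b ⬝ᵥ w = (A.mulVec r) ⬝ᵥ (A.mulVec w) + e ⬝ᵥ (A.mulVec w) := by
    intro w
    rw [hb, Matrix.mulVec_transpose, ← Matrix.dotProduct_mulVec, add_dotProduct]
  have bw_up : ∀ w : Fin n → ℝ, Function.support w ⊆ U →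
      b ⬝ᵥ w ≤ r ⬝ᵥ w + δ * (R * l2norm w) + E * (ε * l2norm w) := by
    intro w hwU
    rw [hbdot w]
    have h1 := rip_cross hA hU hrU hwU
    have h2 : e ⬝ᵥ (A.mulVec w) ≤ ε * (E * l2norm w) := by
      calc e ⬝ᵥ (A.mulVec w) ≤ l2norm e * l2norm (A.mulVec w) := dot_le _ _
        _ ≤ ε * (E * l2norm w) := by
            have h4 := rip_norm_le h1δ hA hU hwU
            rw [← hEdef] at h4
            rw [← hεdef]
            exact mul_le_mul_of_nonneg_left h4 hε0
    rw [← hRdef] at h1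
    linarith only [h1, h2]
  have bw_low : ∀ w : Fin n → ℝ, Function.support w ⊆ U →
      r ⬝ᵥ w - δ * (R * l2norm w) - E * (ε * l2norm w) ≤ b ⬝ᵥ w := by
    intro w hwU
    have hnegU : Function.support (-w) ⊆ U := by
      intro i hi
      apply hwU
      simp only [Function.mem_support, Pi.neg_apply, ne_eq, neg_eq_zero] at hi ⊢
      exact hi
    have h := bw_up (-w) hnegU
    have hneg : l2norm (-w) = l2norm w := by
      unfold l2norm; congr 1; exact Finset.sum_congr rfl fun i _ => by simp
    rw [dotProduct_neg, dotProduct_neg, hneg] at h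
    linarith only [h]
  -- upper bound on G
  have hg : Function.support (restr b Γ) ⊆ Γ := support_restr _ _
  have hgU : Function.support (restr b Γ) ⊆ U := hg.trans hΓU
  have hGle : G ≤ t + δ * R + E * ε := by
    have hGsq : G ^ 2 = b ⬝ᵥ (restr b Γ) := by
      rw [hGdef, l2norm_sq_eq_dot, ← dot_restr_of_support b (restr b Γ) Γ hg]
    have h1 := bw_up (restr b Γ) hgU
    rw [← hGdef] at h1
    have h2 : r ⬝ᵥ (restr b Γ) ≤ t * G := by
      rw [dot_restr_of_support r (restr b Γ) Γ hg]
      have h3 := dot_le (restr r Γ) (restr b Γ)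
      rw [← htdef, ← hGdef] at h3
      exact h3
    have h4 : G ^ 2 ≤ (t + δ * R + E * ε) * G := by
      rw [hGsq]; linarith only [h1, h2]
    rcases eq_or_lt_of_le hG0 with h | h
    · rw [← h]
      have h5 : 0 ≤ δ * R := mul_nonneg hδ0 hR0
      have h6 : 0 ≤ E * ε := mul_nonneg hE0 hε0
      linarith only [h5, h6, ht0]
    · nlinarith only [h4, h]
  -- lower bound on BΩ * R
  have hBΩR : (1 - δ) * R ^ 2 - E * (ε * R) ≤ BΩ * R := by
    have h1 := bw_low r hrU
    rw [← hRdef] at h1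
    have h2 : b ⬝ᵥ r ≤ BΩ * R := by
      rw [dot_restr_of_support b r Ω hrsupp]
      have h3 := dot_le (restr b Ω) r
      rw [← hBΩdef, ← hRdef] at h3
      exact h3
    have h3 : r ⬝ᵥ r = R ^ 2 := by rw [hRdef, ← l2norm_sq_eq_dot]
    rw [h3] at h1
    linarith only [h1, h2]
  have hhd : cH * BΩ ≤ G := by
    have h := hhead Ω hΩmem
    rw [← hBΩdef] at h
    exact h
  -- combined chain
  have hchain : cH * ((1 - δ) * R ^ 2 - E * (ε * R)) ≤ (t + δ * R + E * ε) * R := by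
    calc cH * ((1 - δ) * R ^ 2 - E * (ε * R)) ≤ cH * (BΩ * R) :=
          mul_le_mul_of_nonneg_left hBΩR hcH0.le
      _ = (cH * BΩ) * R := by ring
      _ ≤ G * R := mul_le_mul_of_nonneg_right hhd hR0
      _ ≤ (t + δ * R + E * ε) * R := mul_le_mul_of_nonneg_right hGle hR0
  have hα₀le1 : α₀ ≤ 1 := by
    rw [hα₀]
    linarith only [mul_nonneg hδ0 hcH0.le, hcH1, hδ0, hδ1, hcH0.le]
  have ht : α₀ * R - β₀ * ε ≤ t := by
    rcases eq_or_lt_of_le hR0 with h | h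
    · rw [← h]
      have h5 : 0 ≤ β₀ * ε := mul_nonneg hβ₀0 hε0
      linarith only [h5, ht0]
    · rw [hα₀, hβ₀]
      have hmul : ((cH * (1 - δ) - δ) * R - (1 + cH) * E * ε) * R ≤ t * R := by
        linarith only [hchain]
      exact le_of_mul_le_mul_right hmul h
  have hsplitΓ : R ^ 2 = t ^ 2 + s ^ 2 := by
    rw [hRdef, htdef, hsdef]; exact l2norm_split r Γ
  rcases lt_or_eq_of_le hα₀le1 with hα1 | hα1
  · -- α₀ < 1
    by_cases hcase : α₀ * R ≤ β₀ * ε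
    · -- small r case
      have hsR : s ≤ R := by nlinarith only [hsplitΓ, sq_nonneg t, hs0, hR0]
      have hRle : R ≤ β₀ / α₀ * ε := by
        rw [div_mul_eq_mul_div, le_div_iff₀ hα₀pos]
        linarith only [hcase]
      have h2 : 0 ≤ Real.sqrt (1 - α₀ ^ 2) * R := mul_nonneg (Real.sqrt_nonneg _) hR0
      have h3 : 0 ≤ α₀ * β₀ / Real.sqrt (1 - α₀ ^ 2) * ε :=
        mul_nonneg (div_nonneg (mul_nonneg hα₀pos.le hβ₀0) (Real.sqrt_nonneg _)) hε0
      linarith only [hsR, hRle, h2, h3]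
    · -- main case
      push_neg at hcase
      have h1α2 : 0 < 1 - α₀ ^ 2 := by nlinarith only [hα₀pos, hα1]
      set D := Real.sqrt (1 - α₀ ^ 2) with hDdef
      have hD2 : D ^ 2 = 1 - α₀ ^ 2 := Real.sq_sqrt h1α2.le
      have hDpos : 0 < D := Real.sqrt_pos.2 h1α2
      set K := α₀ * β₀ / D with hKdef
      have hDK : D * K = α₀ * β₀ := by
        rw [hKdef]; field_simp
      have hK0 : 0 ≤ K := div_nonneg (mul_nonneg hα₀pos.le hβ₀0) hDpos.le
      have ht2 : (α₀ * R - β₀ * ε) ^ 2 ≤ t ^ 2 := by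
        have h0 : 0 ≤ α₀ * R - β₀ * ε := by linarith only [hcase]
        exact pow_le_pow_left₀ h0 ht 2
      have e1 : (D * R + K * ε) ^ 2
          = (1 - α₀ ^ 2) * R ^ 2 + 2 * (α₀ * β₀) * (R * ε) + K ^ 2 * ε ^ 2 := by
        linear_combination (R ^ 2) * hD2 + (2 * R * ε) * hDK
      have hD2R : D ^ 2 * R ^ 2 = (1 - α₀ ^ 2) * R ^ 2 := by
        linear_combination R ^ 2 * hD2
      have hDKRe : D * K * (R * ε) = α₀ * β₀ * (R * ε) := by
        linear_combination (R * ε) * hDK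
      have hs2 : s ^ 2 ≤ (D * R + K * ε) ^ 2 := by
        linarith only [hsplitΓ, ht2, hD2R, hDKRe, sq_nonneg (K * ε), sq_nonneg (β₀ * ε)]
      have hRHS0 : 0 ≤ D * R + K * ε :=
        add_nonneg (mul_nonneg hDpos.le hR0) (mul_nonneg hK0 hε0)
      have hs' : s ≤ D * R + K * ε := by
        calc s = Real.sqrt (s ^ 2) := (Real.sqrt_sq hs0).symm
          _ ≤ Real.sqrt ((D * R + K * ε) ^ 2) := Real.sqrt_le_sqrt hs2
          _ = D * R + K * ε := Real.sqrt_sq hRHS0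
      have hfin : 0 ≤ β₀ / α₀ * ε := mul_nonneg (div_nonneg hβ₀0 hα₀pos.le) hε0
      linarith only [hs', hfin]
  · -- α₀ = 1, so δ = 0 and cH = 1
    have h11 : (1:ℝ) = cH * (1 - δ) - δ := by rw [hα1] at hα₀; exact hα₀
    have hδz : δ = 0 := by linarith only [h11, mul_nonneg hδ0 hcH0.le, hcH1, hδ0]
    have hcz : cH = 1 := by rw [hδz] at h11; linarith only [h11]
    have hE1 : E = 1 := by
      rw [hEdef, hδz]
      simpa using Real.sqrt_one
    have hβ2 : β₀ = 2 := by
      rw [hβ₀, hcz, hE1]; norm_num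
    have hsqrt0 : Real.sqrt (1 - α₀ ^ 2) = 0 := by
      rw [hα1]; norm_num
    rw [hsqrt0, hα1, hβ2]
    norm_num
    -- q = part of b on Γ \ Ω is small; p = part of b on Ω \ Γ is large
    -- bound on q
    have hq_le : l2norm (restr b (Ωᶜ ∩ Γ)) ≤ ε := by
      have hqsupp : Function.support (restr b (Ωᶜ ∩ Γ)) ⊆ Ωᶜ ∩ Γ := support_restr _ _
      have hqU : Function.support (restr b (Ωᶜ ∩ Γ)) ⊆ U :=
        hqsupp.trans (Set.inter_subset_right.trans hΓU)
      have h1 := bw_up (restr b (Ωᶜ ∩ Γ)) hqU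
      have h2 : b ⬝ᵥ (restr b (Ωᶜ ∩ Γ)) = l2norm (restr b (Ωᶜ ∩ Γ)) ^ 2 := by
        rw [dot_restr_of_support b _ _ hqsupp, ← l2norm_sq_eq_dot]
      have h3 : r ⬝ᵥ (restr b (Ωᶜ ∩ Γ)) = 0 := Finset.sum_eq_zero fun i _ => by
        by_cases hiΩ : i ∈ Ω
        · have hnot : i ∉ Ωᶜ ∩ Γ := fun hmem => hmem.1 hiΩ
          have hq0 : restr b (Ωᶜ ∩ Γ) i = 0 := Set.indicator_of_notMem hnot b
          rw [hq0, mul_zero]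
        · have hr0 : r i = 0 := by
            by_contra h; exact hiΩ (hrsupp h)
          rw [hr0, zero_mul]
      rw [h2, h3, hδz, hE1] at h1
      rcases eq_or_lt_of_le (l2norm_nonneg (restr b (Ωᶜ ∩ Γ))) with h | h
      · rw [← h]; exact hε0
      · nlinarith only [h1, h]
    -- lower bound via p
    have hrc1 : Function.support (restr r Γᶜ) ⊆ Γᶜ := support_restr _ _
    have hrc2 : Function.support (restr r Γᶜ) ⊆ Ω := (support_restr' _ _).trans hrsupp
    have hrcT : Function.support (restr r Γᶜ) ⊆ Γᶜ ∩ Ω := Set.subset_inter hrc1 hrc2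
    have hrcU : Function.support (restr r Γᶜ) ⊆ U := hrc2.trans hΩU
    have hp_ge : s ≤ l2norm (restr b (Γᶜ ∩ Ω)) + ε := by
      have h1 := bw_low (restr r Γᶜ) hrcU
      rw [← hsdef] at h1
      have h2 : r ⬝ᵥ (restr r Γᶜ) = s ^ 2 := by
        rw [dot_restr_of_support r _ _ hrc1, hsdef, l2norm_sq_eq_dot]
      have h3 : b ⬝ᵥ (restr r Γᶜ) ≤ l2norm (restr b (Γᶜ ∩ Ω)) * s := by
        rw [dot_restr_of_support b _ _ hrcT]
        have h4 := dot_le (restr b (Γᶜ ∩ Ω)) (restr r Γᶜ)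
        rw [← hsdef] at h4
        exact h4
      rw [h2, hδz, hE1] at h1
      rcases eq_or_lt_of_le hs0 with h | h
      · rw [← h]
        have h7 := l2norm_nonneg (restr b (Γᶜ ∩ Ω))
        linarith only [h7, hε0]
      · nlinarith only [h1, h3, h]
    -- head comparison: ‖p‖ ≤ ‖q‖
    have hhd1 : BΩ ≤ G := by
      have h := hhd; rw [hcz, one_mul] at h; exact h
    have hBG2 : BΩ ^ 2 ≤ G ^ 2 := pow_le_pow_left₀ hBΩ0 hhd1 2
    have hGsplit : G ^ 2 = l2norm (restr (restr b Γ) Ω) ^ 2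
        + l2norm (restr (restr b Γ) Ωᶜ) ^ 2 := by
      rw [hGdef]; exact l2norm_split (restr b Γ) Ω
    have hBsplit : BΩ ^ 2 = l2norm (restr (restr b Ω) Γ) ^ 2
        + l2norm (restr (restr b Ω) Γᶜ) ^ 2 := by
      rw [hBΩdef]; exact l2norm_split (restr b Ω) Γ
    have hcomm : restr (restr b Γ) Ω = restr (restr b Ω) Γ := by
      simp only [restr, Set.indicator_indicator]
      rw [Set.inter_comm]
    have hqid : restr (restr b Γ) Ωᶜ = restr b (Ωᶜ ∩ Γ) := by
      simp only [restr, Set.indicator_indicator]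
    have hpid : restr (restr b Ω) Γᶜ = restr b (Γᶜ ∩ Ω) := by
      simp only [restr, Set.indicator_indicator]
    rw [hcomm, hqid] at hGsplit
    rw [hpid] at hBsplit
    have hpq2 : l2norm (restr b (Γᶜ ∩ Ω)) ^ 2 ≤ l2norm (restr b (Ωᶜ ∩ Γ)) ^ 2 := by
      linarith only [hBG2, hGsplit, hBsplit]
    have hpq : l2norm (restr b (Γᶜ ∩ Ω)) ≤ l2norm (restr b (Ωᶜ ∩ Γ)) := by
      nlinarith only [hpq2, l2norm_nonneg (restr b (Γᶜ ∩ Ω)), l2norm_nonneg (restr b (Ωᶜ ∩ Γ))]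
    linarith only [hp_ge, hpq, hq_le]
end

section
/- Let 𝕄, 𝕄_T, 𝕄_H be structured sparsity models on {1,…,n}, let 0 ≤ δ < 1 and 0 < c_H ≤ 1 be reals, and set α₀ := c_H(1−δ) − δ and β₀ := (1+c_H)√(1+δ). Suppose A ∈ ℝ^{m×n} has the (δ, 𝕄 ⊕ 𝕄_T ⊕ 𝕄_H)-model-RIP. Let x, xⁱ ∈ ℝⁿ with supp(x) ∈ 𝕄⁺ and supp(xⁱ) ∈ 𝕄_T⁺, let e ∈ ℝᵐ, set r = x − xⁱ and b = Aᵀ(Ar + e). Let Γ ∈ 𝕄_H⁺ satisfy ‖b_Γ‖₂ ≥ c_H‖b_Ω‖₂ for every Ω ∈ 𝕄_T ⊕ 𝕄. Then ‖r_Γ‖₂ ≥ α₀‖r‖₂ − β₀‖e‖₂. -/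
open Matrix

lemma l2norm_nonneg' {k : ℕ} (x : Fin k → ℝ) : 0 ≤ l2norm x := Real.sqrt_nonneg _

lemma l2norm_sq' {k : ℕ} (x : Fin k → ℝ) : (l2norm x) ^ 2 = x ⬝ᵥ x := by
  unfold l2norm
  rw [Real.sq_sqrt (Finset.sum_nonneg fun i _ => sq_nonneg _)]
  simp [dotProduct, sq]

lemma dot_le' {k : ℕ} (x y : Fin k → ℝ) : x ⬝ᵥ y ≤ l2norm x * l2norm y :=
  Real.sum_mul_le_sqrt_mul_sqrt _ _ _

lemma l2norm_smul' {k : ℕ} (c : ℝ) (x : Fin k → ℝ) : l2norm (c • x) = |c| * l2norm x := by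
  unfold l2norm
  rw [show ∑ i, ((c • x) i) ^ 2 = c ^ 2 * ∑ i, (x i) ^ 2 by
      rw [Finset.mul_sum]; exact Finset.sum_congr rfl fun i _ => by
        simp [mul_pow],
    Real.sqrt_mul (sq_nonneg c), Real.sqrt_sq_eq_abs]

lemma modelPlus_mono' {k : ℕ} {M : Set (Set (Fin k))} {B C : Set (Fin k)}
    (h : C ⊆ B) (hB : B ∈ modelPlus M) : C ∈ modelPlus M := by
  obtain ⟨S, hS, hBS⟩ := hB; exact ⟨S, hS, h.trans hBS⟩

lemma restr_dot' {k : ℕ} (x y : Fin k → ℝ) (Ω : Set (Fin k))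
    (hy : Function.support y ⊆ Ω) : (restr x Ω) ⬝ᵥ y = x ⬝ᵥ y := by
  unfold restr dotProduct
  refine Finset.sum_congr rfl fun i _ => ?_
  by_cases hyi : y i = 0
  · simp [hyi]
  · rw [Set.indicator_of_mem (hy hyi)]

lemma supp_sub' {k : ℕ} (x y : Fin k → ℝ) :
    Function.support (x - y) ⊆ Function.support x ∪ Function.support y := by
  intro i hi
  by_contra h
  simp only [Set.mem_union, Function.mem_support, not_or, not_not] at h
  apply hi
  simp [h.1, h.2]

lemma supp_addfn' {k : ℕ} (x y : Fin k → ℝ) :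
    Function.support (x + y) ⊆ Function.support x ∪ Function.support y := by
  intro i hi
  by_contra h
  simp only [Set.mem_union, Function.mem_support, not_or, not_not] at h
  apply hi
  simp [h.1, h.2]

/-- RIP polarization bound. -/
lemma polar' {m n : ℕ} (A : Matrix (Fin m) (Fin n) ℝ) (δ : ℝ) (Md : Set (Set (Fin n)))
    (hA : hasModelRIP A δ Md) (u v : Fin n → ℝ) (B : Set (Fin n)) (hB : B ∈ modelPlus Md)
    (hu : Function.support u ⊆ B) (hv : Function.support v ⊆ B) :
    (A.mulVec u) ⬝ᵥ (A.mulVec v) ≤ u ⬝ᵥ v + δ * ((l2norm u) ^ 2 + (l2norm v) ^ 2) / 2 := by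
  have h1 := hA (u + v) (modelPlus_mono'
    ((supp_addfn' u v).trans (Set.union_subset hu hv)) hB)
  have h2 := hA (u - v) (modelPlus_mono'
    ((supp_sub' u v).trans (Set.union_subset hu hv)) hB)
  simp only [l2norm_sq', Matrix.mulVec_add, Matrix.mulVec_sub, add_dotProduct,
    dotProduct_add, sub_dotProduct, dotProduct_sub] at h1 h2 ⊢
  have hc1 := dotProduct_comm (A.mulVec u) (A.mulVec v)
  have hc2 := dotProduct_comm u v
  nlinarith [h1.2, h2.1]

set_option maxHeartbeats 1000000 in
theorem stmt1 {n m : ℕ}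
    (M MT MH : Set (Set (Fin n)))
    (δ cH : ℝ) (hδ0 : 0 ≤ δ) (hδ1 : δ < 1) (hcH0 : 0 < cH) (hcH1 : cH ≤ 1)
    (α₀ β₀ : ℝ) (hα₀ : α₀ = cH * (1 - δ) - δ)
    (hβ₀ : β₀ = (1 + cH) * Real.sqrt (1 + δ))
    (A : Matrix (Fin m) (Fin n) ℝ)
    (hA : hasModelRIP A δ (modelSum (modelSum M MT) MH))
    (x xi : Fin n → ℝ)
    (hx : Function.support x ∈ modelPlus M)
    (hxi : Function.support xi ∈ modelPlus MT)
    (e : Fin m → ℝ)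
    (r : Fin n → ℝ) (hr : r = x - xi)
    (b : Fin n → ℝ) (hb : b = A.transpose.mulVec (A.mulVec r + e))
    (Γ : Set (Fin n)) (hΓ : Γ ∈ modelPlus MH)
    (hhead : ∀ Ω ∈ modelSum MT M, l2norm (restr b Γ) ≥ cH * l2norm (restr b Ω)) :
    l2norm (restr r Γ) ≥ α₀ * l2norm r - β₀ * l2norm e := by
  obtain ⟨S, hS, hxS⟩ := hx
  obtain ⟨ST, hST, hxiS⟩ := hxi
  obtain ⟨SH, hSH, hΓS⟩ := hΓ
  set s : ℝ := Real.sqrt (1 + δ) with hs_def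
  have hs0 : 0 ≤ s := Real.sqrt_nonneg _
  have hs_sq : s ^ 2 = 1 + δ := Real.sq_sqrt (by linarith)
  have hΩmem : ST ∪ S ∈ modelSum MT M := ⟨ST, hST, S, hS, rfl⟩
  have hrsupp : Function.support r ⊆ S ∪ ST := by
    rw [hr]; exact (supp_sub' x xi).trans (Set.union_subset_union hxS hxiS)
  have hBig : (S ∪ ST) ∪ SH ∈ modelPlus (modelSum (modelSum M MT) MH) :=
    ⟨(S ∪ ST) ∪ SH, ⟨S ∪ ST, ⟨S, hS, ST, hST, rfl⟩, SH, hSH, rfl⟩, subset_rfl⟩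
  have hrF : Function.support r ⊆ (S ∪ ST) ∪ SH :=
    hrsupp.trans Set.subset_union_left
  have hRIPr := hA r (modelPlus_mono' hrF hBig)
  have hAr : l2norm (A.mulVec r) ≤ s * l2norm r := by
    have h := hRIPr.2
    calc l2norm (A.mulVec r) = Real.sqrt ((l2norm (A.mulVec r)) ^ 2) :=
          (Real.sqrt_sq (l2norm_nonneg' _)).symm
      _ ≤ Real.sqrt ((1 + δ) * (l2norm r) ^ 2) := Real.sqrt_le_sqrt h
      _ = s * l2norm r := by
          rw [Real.sqrt_mul (by linarith), Real.sqrt_sq (l2norm_nonneg' _)]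
  have hb_dot : ∀ w : Fin n → ℝ, b ⬝ᵥ w = (A.mulVec r + e) ⬝ᵥ (A.mulVec w) := by
    intro w
    rw [hb, Matrix.mulVec_transpose, ← Matrix.dotProduct_mulVec]
  -- lower bound on ‖b_Ω‖ * ‖r‖
  have key_low : (1 - δ) * (l2norm r) ^ 2 - s * l2norm e * l2norm r ≤
      l2norm (restr b (ST ∪ S)) * l2norm r := by
    have h1 : (restr b (ST ∪ S)) ⬝ᵥ r = b ⬝ᵥ r :=
      restr_dot' b r _ (hrsupp.trans (by rw [Set.union_comm]))
    have h2 : b ⬝ᵥ r = (A.mulVec r) ⬝ᵥ (A.mulVec r) + e ⬝ᵥ (A.mulVec r) := by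
      rw [hb_dot r, add_dotProduct]
    have h4 : (1 - δ) * (l2norm r) ^ 2 ≤ (A.mulVec r) ⬝ᵥ (A.mulVec r) := by
      rw [← l2norm_sq']; exact hRIPr.1
    have h5 : -(e ⬝ᵥ A.mulVec r) ≤ l2norm e * l2norm (A.mulVec r) := by
      calc -(e ⬝ᵥ A.mulVec r) = (-e) ⬝ᵥ A.mulVec r := (neg_dotProduct _ _).symm
        _ ≤ l2norm (-e) * l2norm (A.mulVec r) := dot_le' _ _
        _ = l2norm e * l2norm (A.mulVec r) := by
            rw [show (-e) = (-1 : ℝ) • e by funext i; simp, l2norm_smul']; norm_num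
    have h6 : (restr b (ST ∪ S)) ⬝ᵥ r ≤ l2norm (restr b (ST ∪ S)) * l2norm r :=
      dot_le' _ _
    have h7 : l2norm e * l2norm (A.mulVec r) ≤ l2norm e * (s * l2norm r) :=
      mul_le_mul_of_nonneg_left hAr (l2norm_nonneg' e)
    nlinarith [h1, h2, h4, h5, h6, h7]
  rcases eq_or_lt_of_le (l2norm_nonneg' r) with hr0 | hr0
  · -- r has zero norm: RHS ≤ 0
    have hβ : 0 ≤ β₀ := by rw [hβ₀]; positivity
    have : α₀ * l2norm r - β₀ * l2norm e ≤ 0 := by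
      rw [← hr0]
      have := mul_nonneg hβ (l2norm_nonneg' e)
      linarith
    linarith [l2norm_nonneg' (restr r Γ)]
  -- main case: ‖r‖ > 0
  have hbΩ : (1 - δ) * l2norm r - s * l2norm e ≤ l2norm (restr b (ST ∪ S)) := by
    have h := key_low
    nlinarith [hr0]
  have hhd := hhead (ST ∪ S) hΩmem
  rcases eq_or_lt_of_le (l2norm_nonneg' (restr b Γ)) with hbΓ | hbΓ
  · -- ‖b_Γ‖ = 0 forces the RHS to be nonpositive
    have h1 : l2norm (restr b (ST ∪ S)) ≤ 0 := by nlinarith [hhd, hcH0]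
    have h2 : (1 - δ) * l2norm r - s * l2norm e ≤ 0 := by linarith
    have h3 := mul_nonpos_of_nonneg_of_nonpos hcH0.le h2
    rw [hα₀, hβ₀]
    nlinarith [l2norm_nonneg' (restr r Γ), mul_nonneg hδ0 (l2norm_nonneg' r),
      mul_nonneg hs0 (l2norm_nonneg' e)]
  -- main case: ‖b_Γ‖ > 0
  set t : ℝ := l2norm (restr b Γ) with ht_def
  have htne : t ≠ 0 := ne_of_gt hbΓ
  have hu_supp : Function.support (t⁻¹ • restr b Γ) ⊆ Γ :=
    (Function.support_const_smul_subset _ _).trans (Set.support_indicator_subset)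
  have hu_norm : l2norm (t⁻¹ • restr b Γ) = 1 := by
    rw [l2norm_smul', abs_inv, abs_of_pos hbΓ, ← ht_def, inv_mul_cancel₀ htne]
  have hu_mem : Function.support (t⁻¹ • restr b Γ) ⊆ (S ∪ ST) ∪ SH :=
    hu_supp.trans (hΓS.trans Set.subset_union_right)
  have hRIPu := hA (t⁻¹ • restr b Γ) (modelPlus_mono' hu_mem hBig)
  have hAu : l2norm (A.mulVec (t⁻¹ • restr b Γ)) ≤ s := by
    have h := hRIPu.2
    rw [hu_norm] at h
    calc l2norm (A.mulVec (t⁻¹ • restr b Γ))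
        = Real.sqrt ((l2norm (A.mulVec (t⁻¹ • restr b Γ))) ^ 2) :=
          (Real.sqrt_sq (l2norm_nonneg' _)).symm
      _ ≤ Real.sqrt (1 + δ) := Real.sqrt_le_sqrt (by nlinarith)
      _ = s := rfl
  -- t = ⟨Ar + e, Au⟩
  have hbΓ_eq : t = (A.mulVec r + e) ⬝ᵥ (A.mulVec (t⁻¹ • restr b Γ)) := by
    have h1 : t ^ 2 = (restr b Γ) ⬝ᵥ (restr b Γ) := l2norm_sq' _
    have h2 : (restr b Γ) ⬝ᵥ (restr b Γ) = b ⬝ᵥ (restr b Γ) :=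
      restr_dot' b (restr b Γ) Γ Set.support_indicator_subset
    rw [Matrix.mulVec_smul, dotProduct_smul, ← hb_dot, ← h2, ← h1, smul_eq_mul, sq,
      ← mul_assoc, inv_mul_cancel₀ htne, one_mul]
  -- polarization bound with normalized r
  have hrne : l2norm r ≠ 0 := ne_of_gt hr0
  have hr'_supp : Function.support ((l2norm r)⁻¹ • r) ⊆ (S ∪ ST) ∪ SH :=
    (Function.support_const_smul_subset _ _).trans hrF
  have hr'_norm : l2norm ((l2norm r)⁻¹ • r) = 1 := by
    rw [l2norm_smul', abs_inv, abs_of_pos hr0, inv_mul_cancel₀ hrne]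
  have hpolar := polar' A δ _ hA ((l2norm r)⁻¹ • r) (t⁻¹ • restr b Γ)
    ((S ∪ ST) ∪ SH) hBig hr'_supp hu_mem
  rw [hr'_norm, hu_norm] at hpolar
  have e1 : (A.mulVec ((l2norm r)⁻¹ • r)) ⬝ᵥ (A.mulVec (t⁻¹ • restr b Γ)) =
      (l2norm r)⁻¹ * ((A.mulVec r) ⬝ᵥ (A.mulVec (t⁻¹ • restr b Γ))) := by
    rw [Matrix.mulVec_smul, smul_dotProduct, smul_eq_mul]
  have e2 : ((l2norm r)⁻¹ • r) ⬝ᵥ (t⁻¹ • restr b Γ) =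
      (l2norm r)⁻¹ * (r ⬝ᵥ (t⁻¹ • restr b Γ)) := by
    rw [smul_dotProduct, smul_eq_mul]
  rw [e1, e2] at hpolar
  have hcross : (A.mulVec r) ⬝ᵥ (A.mulVec (t⁻¹ • restr b Γ)) ≤
      r ⬝ᵥ (t⁻¹ • restr b Γ) + δ * l2norm r := by
    have h2 := mul_le_mul_of_nonneg_left hpolar hr0.le
    have h3 : l2norm r * (l2norm r)⁻¹ = 1 := mul_inv_cancel₀ hrne
    calc (A.mulVec r) ⬝ᵥ (A.mulVec (t⁻¹ • restr b Γ))
        = l2norm r * ((l2norm r)⁻¹ * ((A.mulVec r) ⬝ᵥ (A.mulVec (t⁻¹ • restr b Γ)))) := by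
          rw [← mul_assoc, h3, one_mul]
      _ ≤ l2norm r * ((l2norm r)⁻¹ * (r ⬝ᵥ (t⁻¹ • restr b Γ)) + δ * (1 ^ 2 + 1 ^ 2) / 2) := h2
      _ = l2norm r * (l2norm r)⁻¹ * (r ⬝ᵥ (t⁻¹ • restr b Γ)) + δ * l2norm r := by ring
      _ = r ⬝ᵥ (t⁻¹ • restr b Γ) + δ * l2norm r := by rw [h3, one_mul]
  have hru : r ⬝ᵥ (t⁻¹ • restr b Γ) ≤ l2norm (restr r Γ) := by
    calc r ⬝ᵥ (t⁻¹ • restr b Γ) = (restr r Γ) ⬝ᵥ (t⁻¹ • restr b Γ) :=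
          (restr_dot' r (t⁻¹ • restr b Γ) Γ hu_supp).symm
      _ ≤ l2norm (restr r Γ) * l2norm (t⁻¹ • restr b Γ) := dot_le' _ _
      _ = l2norm (restr r Γ) := by rw [hu_norm, mul_one]
  have heu : e ⬝ᵥ (A.mulVec (t⁻¹ • restr b Γ)) ≤ l2norm e * s := by
    calc e ⬝ᵥ (A.mulVec (t⁻¹ • restr b Γ))
        ≤ l2norm e * l2norm (A.mulVec (t⁻¹ • restr b Γ)) := dot_le' _ _
      _ ≤ l2norm e * s := mul_le_mul_of_nonneg_left hAu (l2norm_nonneg' e)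
  have hfin : t ≤ l2norm (restr r Γ) + δ * l2norm r + l2norm e * s := by
    rw [hbΓ_eq, add_dotProduct]
    linarith [hcross, hru, heu]
  rw [hα₀, hβ₀]
  nlinarith [mul_le_mul_of_nonneg_left hbΩ hcH0.le, hhd, hfin]
end

section
/- Let 𝕄, 𝕄_T, 𝕄_H be structured sparsity models on {1,…,n}, let 0 ≤ δ < 1, 0 < c_H ≤ 1, c_T ≥ 1 be reals with α₀ := c_H(1−δ) − δ > 0, and set β₀ := (1+c_H)√(1+δ). Suppose A ∈ ℝ^{m×n} has the (δ, 𝕄 ⊕ 𝕄_T ⊕ 𝕄_H)-model-RIP. Let x, xⁱ ∈ ℝⁿ with supp(x) ∈ 𝕄⁺ and supp(xⁱ) ∈ 𝕄_T⁺, let e ∈ ℝᵐ, set r = x − xⁱ and b = Aᵀ(Ar + e). Let Γ ∈ 𝕄_H⁺ satisfy ‖b_Γ‖₂ ≥ c_H‖b_Ω‖₂ for every Ω ∈ 𝕄_T ⊕ 𝕄, set a = xⁱ + b_Γ, and let Ω' ∈ 𝕄_T⁺ satisfy ‖a − a_{Ω'}‖₂ ≤ c_T‖a − a_Ω‖₂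 for every Ω ∈ 𝕄; set x^{i+1} = a_{Ω'}. Then ‖x − x^{i+1}‖₂ ≤ α‖x − xⁱ‖₂ + β‖e‖₂, where α = (1+c_T)(δ + √(1−α₀²)) and β = (1+c_T)(β₀/α₀ + α₀β₀/√(1−α₀²) + √(1+δ)). -/
open scoped Classical

namespace AMIHT

noncomputable def ip {k : ℕ} (u v : Fin k → ℝ) : ℝ := ∑ i, u i * v i

lemma l2norm_nonneg {k : ℕ} (u : Fin k → ℝ) : 0 ≤ l2norm u := Real.sqrt_nonneg _

lemma l2norm_sq {k : ℕ} (u : Fin k → ℝ) : l2norm u ^ 2 = ∑ i, (u i) ^ 2 := by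
  rw [l2norm, Real.sq_sqrt]
  exact Finset.sum_nonneg fun i _ => sq_nonneg _

lemma ip_self {k : ℕ} (u : Fin k → ℝ) : ip u u = l2norm u ^ 2 := by
  rw [l2norm_sq]; simp [ip, sq]

lemma l2norm_eq_norm {k : ℕ} (u : Fin k → ℝ) :
    l2norm u = ‖(WithLp.toLp 2 u : EuclideanSpace ℝ (Fin k))‖ := by
  rw [EuclideanSpace.norm_eq]; simp [l2norm, sq_abs]

lemma ip_eq_inner {k : ℕ} (u v : Fin k → ℝ) :
    ip u v = (inner ℝ (WithLp.toLp 2 u : EuclideanSpace ℝ (Fin k))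
      (WithLp.toLp 2 v : EuclideanSpace ℝ (Fin k)) : ℝ) := by
  simp [ip, PiLp.inner_apply, mul_comm]

lemma abs_ip_le {k : ℕ} (u v : Fin k → ℝ) : |ip u v| ≤ l2norm u * l2norm v := by
  rw [ip_eq_inner, l2norm_eq_norm, l2norm_eq_norm]
  exact abs_real_inner_le_norm _ _

lemma l2norm_eq_zero {k : ℕ} {u : Fin k → ℝ} : l2norm u = 0 ↔ u = 0 := by
  rw [l2norm_eq_norm, norm_eq_zero, WithLp.toLp_eq_zero]

lemma l2norm_add_le {k : ℕ} (u v : Fin k → ℝ) : l2norm (u + v) ≤ l2norm u + l2norm v := by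
  rw [l2norm_eq_norm, l2norm_eq_norm, l2norm_eq_norm]
  exact norm_add_le _ _

lemma l2norm_neg {k : ℕ} (u : Fin k → ℝ) : l2norm (-u) = l2norm u := by
  rw [l2norm_eq_norm, l2norm_eq_norm]; exact norm_neg _

lemma l2norm_sub_comm {k : ℕ} (u v : Fin k → ℝ) : l2norm (u - v) = l2norm (v - u) := by
  rw [← l2norm_neg (u - v)]; congr 1; abel

lemma l2norm_mono {k : ℕ} {u v : Fin k → ℝ} (h : ∀ i, |u i| ≤ |v i|) :
    l2norm u ≤ l2norm v := by
  apply Real.sqrt_le_sqrt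
  apply Finset.sum_le_sum
  intro i _
  have := h i
  nlinarith [abs_nonneg (u i), abs_nonneg (v i), sq_abs (u i), sq_abs (v i)]

lemma l2norm_smul {k : ℕ} (c : ℝ) (u : Fin k → ℝ) : l2norm (c • u) = |c| * l2norm u := by
  rw [l2norm_eq_norm, l2norm_eq_norm]
  exact norm_smul c (WithLp.toLp 2 u : EuclideanSpace ℝ (Fin k)) |>.trans (by rw [Real.norm_eq_abs])

lemma ip_comm {k : ℕ} (u v : Fin k → ℝ) : ip u v = ip v u := by
  simp [ip, mul_comm]

lemma ip_add_right {k : ℕ} (u v w : Fin k → ℝ) : ip u (v + w) = ip u v + ip u w := by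
  simp [ip, mul_add, Finset.sum_add_distrib]

lemma ip_sub_right {k : ℕ} (u v w : Fin k → ℝ) : ip u (v - w) = ip u v - ip u w := by
  simp [ip, mul_sub, Finset.sum_sub_distrib]

lemma ip_smul_left {k : ℕ} (c : ℝ) (u v : Fin k → ℝ) : ip (c • u) v = c * ip u v := by
  simp [ip, Finset.mul_sum, mul_assoc]

lemma ip_smul_right {k : ℕ} (c : ℝ) (u v : Fin k → ℝ) : ip u (c • v) = c * ip u v := by
  rw [ip_comm, ip_smul_left, ip_comm]

-- restriction lemmas
lemma restr_apply {k : ℕ} (x : Fin k → ℝ) (Ω : Set (Fin k)) (i : Fin k) :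
    restr x Ω i = if i ∈ Ω then x i else 0 := by
  simp [restr, Set.indicator]

lemma supp_restr {k : ℕ} (x : Fin k → ℝ) (Ω : Set (Fin k)) :
    Function.support (restr x Ω) ⊆ Ω := by
  intro i hi
  by_contra hns
  simp only [Function.mem_support, restr] at hi
  rw [Set.indicator_of_notMem hns] at hi
  exact hi rfl

lemma restr_eq_self {k : ℕ} {x : Fin k → ℝ} {Ω : Set (Fin k)}
    (h : Function.support x ⊆ Ω) : restr x Ω = x :=
  Set.indicator_eq_self.2 h

lemma restr_zero_of_disjoint {k : ℕ} {x : Fin k → ℝ} {Ω S : Set (Fin k)}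
    (h : Function.support x ⊆ Ω) (hd : ∀ i ∈ S, i ∉ Ω) : restr x S = 0 := by
  funext i
  rw [restr_apply]
  by_cases hi : i ∈ S
  · simp only [hi, if_true]
    by_contra hx
    exact hd i hi (h hx)
  · simp [hi]

lemma ip_restr_swap {k : ℕ} (u v : Fin k → ℝ) (Ω : Set (Fin k)) :
    ip u (restr v Ω) = ip (restr u Ω) v := by
  unfold ip
  apply Finset.sum_congr rfl
  intro i _
  rw [restr_apply, restr_apply]
  by_cases hi : i ∈ Ω <;> simp [hi]

lemma ip_restr_restr {k : ℕ} (u v : Fin k → ℝ) (Ω : Set (Fin k)) :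
    ip (restr u Ω) v = ip (restr u Ω) (restr v Ω) := by
  unfold ip
  apply Finset.sum_congr rfl
  intro i _
  by_cases hi : i ∈ Ω <;> simp [restr_apply, hi]

lemma restr_sub {k : ℕ} (u v : Fin k → ℝ) (Ω : Set (Fin k)) :
    restr (u - v) Ω = restr u Ω - restr v Ω := by
  funext i
  simp only [Pi.sub_apply, restr_apply]
  by_cases hi : i ∈ Ω <;> simp [hi]

lemma l2sq_restr {k : ℕ} (v : Fin k → ℝ) (Ω : Set (Fin k)) :
    l2norm (restr v Ω) ^ 2 = ∑ i, if i ∈ Ω then (v i) ^ 2 else 0 := by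
  rw [l2norm_sq]
  apply Finset.sum_congr rfl
  intro i _
  rw [restr_apply]
  by_cases hi : i ∈ Ω <;> simp [hi]

lemma pyth {k : ℕ} (v : Fin k → ℝ) {S T : Set (Fin k)} (h : S ⊆ T) :
    l2norm (restr v S) ^ 2 + l2norm (restr v (T \ S)) ^ 2 = l2norm (restr v T) ^ 2 := by
  rw [l2sq_restr, l2sq_restr, l2sq_restr, ← Finset.sum_add_distrib]
  apply Finset.sum_congr rfl
  intro i _
  by_cases hiS : i ∈ S
  · have hiT : i ∈ T := h hiS
    have : i ∉ T \ S := fun hx => hx.2 hiS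
    simp [hiS, hiT, this]
  · by_cases hiT : i ∈ T
    · have : i ∈ T \ S := ⟨hiT, hiS⟩
      simp [hiS, hiT, this]
    · have : i ∉ T \ S := fun hx => hiT hx.1
      simp [hiS, hiT, this]

lemma l2norm_restr_le {k : ℕ} (v : Fin k → ℝ) (Ω : Set (Fin k)) :
    l2norm (restr v Ω) ≤ l2norm v := by
  apply l2norm_mono
  intro i
  rw [restr_apply]
  by_cases hi : i ∈ Ω <;> simp [hi, abs_nonneg]

lemma le_of_sq_le_sq {a c : ℝ} (hc : 0 ≤ c) (h : a ^ 2 ≤ c ^ 2) : a ≤ c := by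
  nlinarith

lemma ip_mulVec {n m : ℕ} (A : Matrix (Fin m) (Fin n) ℝ) (w : Fin n → ℝ) (y : Fin m → ℝ) :
    ip w (A.transpose.mulVec y) = ip (A.mulVec w) y := by
  simp only [ip, Matrix.mulVec, dotProduct, Matrix.transpose_apply,
    Finset.mul_sum, Finset.sum_mul]
  rw [Finset.sum_comm]
  exact Finset.sum_congr rfl fun i _ => Finset.sum_congr rfl fun j _ => by ring

lemma sq_mono {a b : ℝ} (ha : 0 ≤ a) (h : a ≤ b) : a ^ 2 ≤ b ^ 2 := by nlinarith

lemma pyth_bound {t N R K : ℝ} (hp : t ^ 2 + N ^ 2 = R ^ 2) (htK : K ≤ t) (hK0 : 0 < K) :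
    N ^ 2 ≤ R ^ 2 - K ^ 2 := by nlinarith

lemma alg2 {N R E a b D : ℝ} (h : N ^ 2 ≤ R ^ 2 - (a * R - b * E) ^ 2) :
    N ^ 2 ≤ (1 - a ^ 2) * R ^ 2 + 2 * (a * b) * R * E + D ^ 2 * E ^ 2 := by
  nlinarith [sq_nonneg (b * E), sq_nonneg (D * E)]

lemma ip_expand_sub {k : ℕ} (p q : Fin k → ℝ) :
    ip (p + q) (p + q) - ip (p - q) (p - q) = 4 * ip p q := by
  simp only [ip, ← Finset.sum_sub_distrib, Finset.mul_sum]
  exact Finset.sum_congr rfl fun i _ => by simp only [Pi.add_apply, Pi.sub_apply]; ring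

lemma ip_expand_add {k : ℕ} (p q : Fin k → ℝ) :
    ip (p + q) (p + q) + ip (p - q) (p - q) = 2 * ip p p + 2 * ip q q := by
  simp only [ip, ← Finset.sum_add_distrib, Finset.mul_sum]
  exact Finset.sum_congr rfl fun i _ => by simp only [Pi.add_apply, Pi.sub_apply]; ring

lemma polar_half {n m : ℕ} (A : Matrix (Fin m) (Fin n) ℝ) (δ : ℝ) (U : Set (Fin n))
    (hrip : ∀ v : Fin n → ℝ, Function.support v ⊆ U →
      (1 - δ) * (l2norm v) ^ 2 ≤ (l2norm (A.mulVec v)) ^ 2 ∧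
      (l2norm (A.mulVec v)) ^ 2 ≤ (1 + δ) * (l2norm v) ^ 2)
    (u v : Fin n → ℝ) (hu : Function.support u ⊆ U) (hv : Function.support v ⊆ U) :
    |ip (A.mulVec u) (A.mulVec v) - ip u v| ≤ δ / 2 * (l2norm u ^ 2 + l2norm v ^ 2) := by
  have hsum : Function.support (u + v) ⊆ U :=
    subset_trans (Function.support_add u v) (Set.union_subset hu hv)
  have hsub : Function.support (u - v) ⊆ U :=
    subset_trans (Function.support_sub u v) (Set.union_subset hu hv)
  obtain ⟨l1, u1⟩ := hrip (u + v) hsum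
  obtain ⟨l2, u2⟩ := hrip (u - v) hsub
  have e1 : l2norm (A.mulVec (u + v)) ^ 2 = ip (A.mulVec u + A.mulVec v) (A.mulVec u + A.mulVec v) := by
    rw [← Matrix.mulVec_add, ip_self]
  have e2 : l2norm (A.mulVec (u - v)) ^ 2 = ip (A.mulVec u - A.mulVec v) (A.mulVec u - A.mulVec v) := by
    rw [← Matrix.mulVec_sub, ip_self]
  have e3 : l2norm (u + v) ^ 2 = ip (u + v) (u + v) := (ip_self _).symm
  have e4 : l2norm (u - v) ^ 2 = ip (u - v) (u - v) := (ip_self _).symm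
  have k1 := ip_expand_sub (A.mulVec u) (A.mulVec v)
  have k2 := ip_expand_sub u v
  have k3 := ip_expand_add u v
  have n1 : ip u u = l2norm u ^ 2 := ip_self u
  have n2 : ip v v = l2norm v ^ 2 := ip_self v
  have k4 : δ * (l2norm (u + v) ^ 2 + l2norm (u - v) ^ 2)
      = δ * (2 * l2norm u ^ 2 + 2 * l2norm v ^ 2) := by
    rw [e3, e4, k3, n1, n2]
  rw [← e3, ← e4] at k2 k3
  rw [← e1, ← e2] at k1
  rw [abs_le]
  constructor <;> linarith

lemma supp_smul {k : ℕ} (c : ℝ) (u : Fin k → ℝ) :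
    Function.support (c • u) ⊆ Function.support u := by
  intro i hi
  simp only [Function.mem_support, Pi.smul_apply, smul_eq_mul] at *
  exact fun h => hi (by rw [h]; ring)

lemma l2norm_zero {k : ℕ} : l2norm (0 : Fin k → ℝ) = 0 := l2norm_eq_zero.2 rfl

lemma polar {n m : ℕ} (A : Matrix (Fin m) (Fin n) ℝ) (δ : ℝ) (U : Set (Fin n))
    (hrip : ∀ v : Fin n → ℝ, Function.support v ⊆ U →
      (1 - δ) * (l2norm v) ^ 2 ≤ (l2norm (A.mulVec v)) ^ 2 ∧
      (l2norm (A.mulVec v)) ^ 2 ≤ (1 + δ) * (l2norm v) ^ 2)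
    (u v : Fin n → ℝ) (hu : Function.support u ⊆ U) (hv : Function.support v ⊆ U) :
    |ip (A.mulVec u) (A.mulVec v) - ip u v| ≤ δ * l2norm u * l2norm v := by
  by_cases hu0 : u = 0
  · subst hu0
    simp [ip, Matrix.mulVec_zero, l2norm_zero]
  by_cases hv0 : v = 0
  · subst hv0
    simp [ip, Matrix.mulVec_zero, l2norm_zero]
  have hNu : 0 < l2norm u := lt_of_le_of_ne (l2norm_nonneg u) (fun h => hu0 (l2norm_eq_zero.1 h.symm))
  have hNv : 0 < l2norm v := lt_of_le_of_ne (l2norm_nonneg v) (fun h => hv0 (l2norm_eq_zero.1 h.symm))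
  set cu := (l2norm u)⁻¹ with hcu_def
  set cv := (l2norm v)⁻¹ with hcv_def
  have hcu : 0 < cu := inv_pos.2 hNu
  have hcv : 0 < cv := inv_pos.2 hNv
  have hu' : Function.support (cu • u) ⊆ U :=
    subset_trans (supp_smul cu u) hu
  have hv' : Function.support (cv • v) ⊆ U :=
    subset_trans (supp_smul cv v) hv
  have h := polar_half A δ U hrip (cu • u) (cv • v) hu' hv'
  have hnu1 : l2norm (cu • u) = 1 := by
    rw [l2norm_smul, abs_of_pos hcu]
    exact inv_mul_cancel₀ (ne_of_gt hNu)
  have hnv1 : l2norm (cv • v) = 1 := by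
    rw [l2norm_smul, abs_of_pos hcv]
    exact inv_mul_cancel₀ (ne_of_gt hNv)
  rw [hnu1, hnv1, Matrix.mulVec_smul, Matrix.mulVec_smul, ip_smul_left, ip_smul_right,
    ip_smul_left, ip_smul_right] at h
  have hfac : cu * (cv * ip (A.mulVec u) (A.mulVec v)) - cu * (cv * ip u v)
      = (cu * cv) * (ip (A.mulVec u) (A.mulVec v) - ip u v) := by ring
  rw [hfac, abs_mul, abs_of_pos (mul_pos hcu hcv)] at h
  have h2 : cu * cv * |ip (A.mulVec u) (A.mulVec v) - ip u v| ≤ δ := by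
    calc cu * cv * |ip (A.mulVec u) (A.mulVec v) - ip u v| ≤ δ / 2 * (1 ^ 2 + 1 ^ 2) := h
    _ = δ := by ring
  have hcc : l2norm u * cu = 1 := mul_inv_cancel₀ (ne_of_gt hNu)
  have hdd : l2norm v * cv = 1 := mul_inv_cancel₀ (ne_of_gt hNv)
  calc |ip (A.mulVec u) (A.mulVec v) - ip u v|
      = (l2norm u * cu) * (l2norm v * cv) * |ip (A.mulVec u) (A.mulVec v) - ip u v| := by
        rw [hcc, hdd]; ring
    _ = l2norm u * l2norm v * (cu * cv * |ip (A.mulVec u) (A.mulVec v) - ip u v|) := by ring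
    _ ≤ l2norm u * l2norm v * δ :=
        mul_le_mul_of_nonneg_left h2 (mul_nonneg hNu.le hNv.le)
    _ = δ * l2norm u * l2norm v := by ring

lemma master {n m : ℕ} (A : Matrix (Fin m) (Fin n) ℝ) (δ : ℝ) (hδ : 0 ≤ δ) (U : Set (Fin n))
    (hrip : ∀ v : Fin n → ℝ, Function.support v ⊆ U →
      (1 - δ) * (l2norm v) ^ 2 ≤ (l2norm (A.mulVec v)) ^ 2 ∧
      (l2norm (A.mulVec v)) ^ 2 ≤ (1 + δ) * (l2norm v) ^ 2)
    (r : Fin n → ℝ) (e : Fin m → ℝ) (hr : Function.support r ⊆ U)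
    (w : Fin n → ℝ) (hw : Function.support w ⊆ U) :
    |ip w (A.transpose.mulVec (A.mulVec r + e)) - ip w r|
      ≤ δ * l2norm w * l2norm r + Real.sqrt (1 + δ) * l2norm w * l2norm e := by
  rw [ip_mulVec, ip_add_right]
  have h1 := polar A δ U hrip w r hw hr
  have h2 : |ip (A.mulVec w) e| ≤ Real.sqrt (1 + δ) * l2norm w * l2norm e := by
    have hcs := abs_ip_le (A.mulVec w) e
    have hAw : l2norm (A.mulVec w) ≤ Real.sqrt (1 + δ) * l2norm w := by
      have hb := (hrip w hw).2
      have h0 : l2norm (A.mulVec w) = Real.sqrt (l2norm (A.mulVec w) ^ 2) :=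
        (Real.sqrt_sq (l2norm_nonneg _)).symm
      rw [h0]
      calc Real.sqrt (l2norm (A.mulVec w) ^ 2) ≤ Real.sqrt ((1 + δ) * l2norm w ^ 2) :=
            Real.sqrt_le_sqrt hb
        _ = Real.sqrt (1 + δ) * l2norm w := by
            rw [Real.sqrt_mul (by linarith), Real.sqrt_sq (l2norm_nonneg _)]
    calc |ip (A.mulVec w) e| ≤ l2norm (A.mulVec w) * l2norm e := hcs
      _ ≤ Real.sqrt (1 + δ) * l2norm w * l2norm e :=
          mul_le_mul_of_nonneg_right hAw (l2norm_nonneg _)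
  have htri : |ip (A.mulVec w) (A.mulVec r) + ip (A.mulVec w) e - ip w r|
      ≤ |ip (A.mulVec w) (A.mulVec r) - ip w r| + |ip (A.mulVec w) e| := by
    have : ip (A.mulVec w) (A.mulVec r) + ip (A.mulVec w) e - ip w r
        = (ip (A.mulVec w) (A.mulVec r) - ip w r) + ip (A.mulVec w) e := by ring
    rw [this]
    exact abs_add_le _ _
  linarith


end AMIHT

set_option maxHeartbeats 2000000 in
theorem stmt2 {n m : ℕ}
    (M MT MH : Set (Set (Fin n)))
    (δ cH cT : ℝ) (hδ0 : 0 ≤ δ) (hδ1 : δ < 1) (hcH0 : 0 < cH) (hcH1 : cH ≤ 1)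
    (hcT : 1 ≤ cT)
    (α₀ β₀ : ℝ) (hα₀ : α₀ = cH * (1 - δ) - δ) (hα₀pos : 0 < α₀)
    (hβ₀ : β₀ = (1 + cH) * Real.sqrt (1 + δ))
    (A : Matrix (Fin m) (Fin n) ℝ)
    (hA : hasModelRIP A δ (modelSum (modelSum M MT) MH))
    (x xi : Fin n → ℝ)
    (hx : Function.support x ∈ modelPlus M)
    (hxi : Function.support xi ∈ modelPlus MT)
    (e : Fin m → ℝ)
    (r : Fin n → ℝ) (hr : r = x - xi)
    (b : Fin n → ℝ) (hb : b = A.transpose.mulVec (A.mulVec r + e))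
    (Γ : Set (Fin n)) (hΓ : Γ ∈ modelPlus MH)
    (hhead : ∀ Ω ∈ modelSum MT M, l2norm (restr b Γ) ≥ cH * l2norm (restr b Ω))
    (a : Fin n → ℝ) (ha : a = xi + restr b Γ)
    (Ω' : Set (Fin n)) (hΩ' : Ω' ∈ modelPlus MT)
    (htail : ∀ Ω ∈ M, l2norm (a - restr a Ω') ≤ cT * l2norm (a - restr a Ω))
    (xnext : Fin n → ℝ) (hxnext : xnext = restr a Ω')
    (α β : ℝ)
    (hα : α = (1 + cT) * (δ + Real.sqrt (1 - α₀ ^ 2)))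
    (hβ : β = (1 + cT) * (β₀ / α₀ + α₀ * β₀ / Real.sqrt (1 - α₀ ^ 2) + Real.sqrt (1 + δ))) :
    l2norm (x - xnext) ≤ α * l2norm (x - xi) + β * l2norm e := by
  classical
  obtain ⟨ΩM, hΩM, hxΩM⟩ := hx
  obtain ⟨ΩT, hΩT, hxiΩT⟩ := hxi
  obtain ⟨Γ', hΓ'MH, hΓΓ'⟩ := hΓ
  have hs0 : (0:ℝ) ≤ Real.sqrt (1 + δ) := Real.sqrt_nonneg _
  have hs_sq : Real.sqrt (1 + δ) ^ 2 = 1 + δ := Real.sq_sqrt (by linarith)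
  have hβ₀0 : 0 ≤ β₀ := by rw [hβ₀]; positivity
  -- the big support superset
  set U : Set (Fin n) := (ΩM ∪ ΩT) ∪ Γ' with hU_def
  have hUmem : ((ΩM ∪ ΩT) ∪ Γ') ∈ modelSum (modelSum M MT) MH :=
    ⟨ΩM ∪ ΩT, ⟨ΩM, hΩM, ΩT, hΩT, rfl⟩, Γ', hΓ'MH, rfl⟩
  have hrip : ∀ v : Fin n → ℝ, Function.support v ⊆ U →
      (1 - δ) * (l2norm v) ^ 2 ≤ (l2norm (A.mulVec v)) ^ 2 ∧
      (l2norm (A.mulVec v)) ^ 2 ≤ (1 + δ) * (l2norm v) ^ 2 :=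
    fun v hv => hA v ⟨(ΩM ∪ ΩT) ∪ Γ', hUmem, hv⟩
  -- supports
  have hsuppr : Function.support r ⊆ ΩT ∪ ΩM := by
    rw [hr]
    refine subset_trans (Function.support_sub x xi) ?_
    intro i hi
    rcases hi with hi | hi
    · exact Or.inr (hxΩM hi)
    · exact Or.inl (hxiΩT hi)
  have hΩU : ΩT ∪ ΩM ⊆ U := by
    intro i hi
    rcases hi with hi | hi
    · exact Or.inl (Or.inr hi)
    · exact Or.inl (Or.inl hi)
  have hsupprU : Function.support r ⊆ U := subset_trans hsuppr hΩU
  have hΓU : Γ ⊆ U := subset_trans hΓΓ' (fun i hi => Or.inr hi)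
  have hrΩ : restr r (ΩT ∪ ΩM) = r := AMIHT.restr_eq_self hsuppr
  -- the master inequality
  have hmaster : ∀ w : Fin n → ℝ, Function.support w ⊆ U →
      |AMIHT.ip w b - AMIHT.ip w r| ≤ δ * l2norm w * l2norm r
        + Real.sqrt (1 + δ) * l2norm w * l2norm e := by
    intro w hw
    rw [hb]
    exact AMIHT.master A δ hδ0 U hrip r e hsupprU w hw
  have hR0 : 0 ≤ l2norm r := AMIHT.l2norm_nonneg r
  have hE0 : 0 ≤ l2norm e := AMIHT.l2norm_nonneg e
  -- residual bound : restrictions of r - b are small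
  have hresid : ∀ S : Set (Fin n), S ⊆ U →
      l2norm (restr (r - b) S) ≤ δ * l2norm r + Real.sqrt (1 + δ) * l2norm e := by
    intro S hS
    have hwU : Function.support (restr (r - b) S) ⊆ U :=
      subset_trans (AMIHT.supp_restr _ _) hS
    have hip1 : AMIHT.ip (restr (r - b) S) (r - b)
        = AMIHT.ip (restr (r - b) S) (restr (r - b) S) := AMIHT.ip_restr_restr (r - b) (r - b) S
    have hsq : l2norm (restr (r - b) S) ^ 2
        = AMIHT.ip (restr (r - b) S) r - AMIHT.ip (restr (r - b) S) b := by
      rw [← AMIHT.ip_self, ← hip1, AMIHT.ip_sub_right]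
    have habs := hmaster (restr (r - b) S) hwU
    have h2 : l2norm (restr (r - b) S) ^ 2
        ≤ δ * l2norm (restr (r - b) S) * l2norm r
          + Real.sqrt (1 + δ) * l2norm (restr (r - b) S) * l2norm e := by
      have h3 := (abs_le.1 habs).1
      linarith [hsq, h3]
    have hw0 : 0 ≤ l2norm (restr (r - b) S) := AMIHT.l2norm_nonneg _
    rcases eq_or_lt_of_le hw0 with hz | hpos
    · rw [← hz]; positivity
    · have h' : l2norm (restr (r - b) S) * l2norm (restr (r - b) S)
          ≤ l2norm (restr (r - b) S) * (δ * l2norm r + Real.sqrt (1 + δ) * l2norm e) := by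
        linarith [h2]
      exact le_of_mul_le_mul_left h' hpos
  -- head property at Ω = ΩT ∪ ΩM
  have hheadΩ := hhead (ΩT ∪ ΩM) ⟨ΩT, hΩT, ΩM, hΩM, rfl⟩
  -- decomposition
  have hdecomp : r - restr b Γ = restr (r - b) Γ + restr r Γᶜ := by
    funext i
    simp only [Pi.sub_apply, Pi.add_apply, AMIHT.restr_apply, Set.mem_compl_iff]
    by_cases hi : i ∈ Γ <;> simp [hi]
  -- Step 1 : tail approximation
  have hstep1 : l2norm (x - xnext) ≤ (1 + cT) * l2norm (r - restr b Γ) := by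
    have hxa : x - a = r - restr b Γ := by
      rw [ha, hr]; funext i; simp only [Pi.sub_apply, Pi.add_apply]; ring
    have hid : x - xnext = (x - a) + (a - restr a Ω') := by rw [hxnext]; abel
    have htri : l2norm (x - xnext) ≤ l2norm (x - a) + l2norm (a - restr a Ω') := by
      rw [hid]; exact AMIHT.l2norm_add_le _ _
    have htail' := htail ΩM hΩM
    have hmono : l2norm (a - restr a ΩM) ≤ l2norm (a - x) := by
      apply AMIHT.l2norm_mono
      intro i
      simp only [Pi.sub_apply, AMIHT.restr_apply]
      by_cases hi : i ∈ ΩM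
      · simp [hi]
      · have hxz : x i = 0 := by
          by_contra hxx
          exact hi (hxΩM hxx)
        simp [hi, hxz]
    have hax : l2norm (a - x) = l2norm (x - a) := AMIHT.l2norm_sub_comm a x
    have hcT0 : (0:ℝ) ≤ cT := by linarith
    have h5 : cT * l2norm (a - restr a ΩM) ≤ cT * l2norm (x - a) := by
      rw [← hax]; exact mul_le_mul_of_nonneg_left hmono hcT0
    rw [← hxa]
    linarith [htri, htail', h5]
  -- the head-approximation bound
  have hα₀le1 : α₀ ≤ 1 := by
    rw [hα₀]
    have hint : 0 ≤ (1 - cH) * (1 - δ) :=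
      mul_nonneg (sub_nonneg.2 hcH1) (by linarith : (0:ℝ) ≤ 1 - δ)
    linarith [hint]
  have hhead4 : l2norm (restr r Γᶜ) ≤ Real.sqrt (1 - α₀ ^ 2) * l2norm r
      + (β₀ / α₀ + α₀ * β₀ / Real.sqrt (1 - α₀ ^ 2)) * l2norm e := by
    rcases eq_or_lt_of_le hα₀le1 with hcase | hcase
    · -- boundary case α₀ = 1, i.e. δ = 0 and cH = 1
      have hδz : δ = 0 := by
        rw [hα₀] at hcase
        have hint : 0 ≤ (1 - cH) * (1 - δ) :=
          mul_nonneg (sub_nonneg.2 hcH1) (by linarith : (0:ℝ) ≤ 1 - δ)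
        have : δ ≤ 0 := by linarith [hint]
        linarith
      have hcHz : cH = 1 := by
        rw [hα₀, hδz] at hcase
        linarith
      have hgoal_eq : Real.sqrt (1 - α₀ ^ 2) * l2norm r
          + (β₀ / α₀ + α₀ * β₀ / Real.sqrt (1 - α₀ ^ 2)) * l2norm e = 2 * l2norm e := by
        rw [hcase, hβ₀, hδz, hcHz]
        norm_num [Real.sqrt_one, Real.sqrt_zero]
      rw [hgoal_eq]
      -- main argument for the boundary case
      have hrcompl : restr r Γᶜ = restr r ((ΩT ∪ ΩM) \ Γ) := by
        funext i
        simp only [AMIHT.restr_apply, Set.mem_compl_iff, Set.mem_diff]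
        by_cases hiΓ : i ∈ Γ
        · simp [hiΓ]
        · by_cases hiΩ : i ∈ ΩT ∪ ΩM
          · simp [hiΓ, hiΩ]
          · have hrz : r i = 0 := by
              by_contra hrr
              exact hiΩ (hsuppr hrr)
            simp [hiΓ, hiΩ, hrz]
      have p1 := AMIHT.pyth b (Set.inter_subset_left : (ΩT ∪ ΩM) ∩ Γ ⊆ ΩT ∪ ΩM)
      have p2 := AMIHT.pyth b (Set.inter_subset_left : Γ ∩ (ΩT ∪ ΩM) ⊆ Γ)
      have hΩdiff : (ΩT ∪ ΩM) \ ((ΩT ∪ ΩM) ∩ Γ) = (ΩT ∪ ΩM) \ Γ := by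
        ext i; simp only [Set.mem_diff, Set.mem_inter_iff]; tauto
      have hΓdiff : Γ \ (Γ ∩ (ΩT ∪ ΩM)) = Γ \ (ΩT ∪ ΩM) := by
        ext i; simp only [Set.mem_diff, Set.mem_inter_iff]; tauto
      have hIcomm : (ΩT ∪ ΩM) ∩ Γ = Γ ∩ (ΩT ∪ ΩM) := Set.inter_comm _ _
      rw [hΩdiff, hIcomm] at p1
      rw [hΓdiff] at p2
      -- bound on b restricted to Γ \ Ω
      have hzero : restr r (Γ \ (ΩT ∪ ΩM)) = 0 :=
        AMIHT.restr_zero_of_disjoint hsuppr (fun i hi => hi.2)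
      have hbΓΩ : restr b (Γ \ (ΩT ∪ ΩM)) = -(restr (r - b) (Γ \ (ΩT ∪ ΩM))) := by
        rw [AMIHT.restr_sub, hzero]
        funext i; simp
      have hresid1 := hresid (Γ \ (ΩT ∪ ΩM))
        (subset_trans (Set.diff_subset) hΓU)
      have hbound1 : l2norm (restr b (Γ \ (ΩT ∪ ΩM))) ≤ l2norm e := by
        rw [hbΓΩ, AMIHT.l2norm_neg]
        calc l2norm (restr (r - b) (Γ \ (ΩT ∪ ΩM)))
            ≤ δ * l2norm r + Real.sqrt (1 + δ) * l2norm e := hresid1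
          _ = l2norm e := by rw [hδz]; norm_num [Real.sqrt_one]
      -- head with cH = 1
      have hhead1 : l2norm (restr b Γ) ≥ l2norm (restr b (ΩT ∪ ΩM)) := by
        have := hheadΩ
        rw [hcHz] at this
        linarith
      -- compare the two differences
      have hsq' : l2norm (restr b (ΩT ∪ ΩM)) ^ 2 ≤ l2norm (restr b Γ) ^ 2 :=
        AMIHT.sq_mono (AMIHT.l2norm_nonneg (restr b (ΩT ∪ ΩM))) hhead1
      have hb1 : l2norm (restr b ((ΩT ∪ ΩM) \ Γ)) ^ 2
          ≤ l2norm (restr b (Γ \ (ΩT ∪ ΩM))) ^ 2 := by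
        linarith [p1, p2, hsq']
      have hb2 : l2norm (restr b ((ΩT ∪ ΩM) \ Γ)) ≤ l2norm e := by
        apply AMIHT.le_of_sq_le_sq (le_trans (AMIHT.l2norm_nonneg _) hbound1)
        calc l2norm (restr b ((ΩT ∪ ΩM) \ Γ)) ^ 2
            ≤ l2norm (restr b (Γ \ (ΩT ∪ ΩM))) ^ 2 := hb1
          _ ≤ l2norm e ^ 2 :=
              AMIHT.sq_mono (AMIHT.l2norm_nonneg (restr b (Γ \ (ΩT ∪ ΩM)))) hbound1
      -- r on Ω \ Γ
      have hrid : restr r ((ΩT ∪ ΩM) \ Γ)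
          = restr b ((ΩT ∪ ΩM) \ Γ) + restr (r - b) ((ΩT ∪ ΩM) \ Γ) := by
        rw [AMIHT.restr_sub]; abel
      have hresid2 := hresid ((ΩT ∪ ΩM) \ Γ)
        (subset_trans (Set.diff_subset) hΩU)
      have hresid2' : l2norm (restr (r - b) ((ΩT ∪ ΩM) \ Γ)) ≤ l2norm e := by
        calc l2norm (restr (r - b) ((ΩT ∪ ΩM) \ Γ))
            ≤ δ * l2norm r + Real.sqrt (1 + δ) * l2norm e := hresid2
          _ = l2norm e := by rw [hδz]; norm_num [Real.sqrt_one]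
      calc l2norm (restr r Γᶜ) = l2norm (restr r ((ΩT ∪ ΩM) \ Γ)) := by rw [hrcompl]
        _ ≤ l2norm (restr b ((ΩT ∪ ΩM) \ Γ)) + l2norm (restr (r - b) ((ΩT ∪ ΩM) \ Γ)) := by
            rw [hrid]; exact AMIHT.l2norm_add_le _ _
        _ ≤ 2 * l2norm e := by linarith [hb2, hresid2']
    · -- main case α₀ < 1
      have hq0 : 0 < 1 - α₀ ^ 2 := by
        have h' : 0 < (1 - α₀) * (1 + α₀) := mul_pos (by linarith) (by linarith)
        linarith [h']
      have hq2 : Real.sqrt (1 - α₀ ^ 2) ^ 2 = 1 - α₀ ^ 2 := Real.sq_sqrt (le_of_lt hq0)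
      have hqpos : 0 < Real.sqrt (1 - α₀ ^ 2) := Real.sqrt_pos.2 hq0
      by_cases hre : α₀ * l2norm r ≤ β₀ * l2norm e
      · -- trivial subcase
        have h1 : l2norm (restr r Γᶜ) ≤ l2norm r := AMIHT.l2norm_restr_le r Γᶜ
        have h2 : l2norm r ≤ β₀ / α₀ * l2norm e := by
          rw [div_mul_eq_mul_div, le_div_iff₀ hα₀pos]
          linarith [hre]
        have h3 : 0 ≤ Real.sqrt (1 - α₀ ^ 2) * l2norm r := by positivity
        have h4 : 0 ≤ α₀ * β₀ / Real.sqrt (1 - α₀ ^ 2) * l2norm e := by positivity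
        linarith [h1, h2, h3, h4]
      · push_neg at hre
        have hRpos : 0 < l2norm r := by
          by_contra hc
          push_neg at hc
          have h' : α₀ * l2norm r ≤ 0 := mul_nonpos_of_nonneg_of_nonpos hα₀pos.le hc
          linarith [mul_nonneg hβ₀0 hE0]
        -- lower bound on l2norm (restr b Ω)
        have hbr := hmaster r hsupprU
        have hiprr : AMIHT.ip r r = l2norm r ^ 2 := AMIHT.ip_self r
        have hipbr : (1 - δ) * l2norm r ^ 2 - Real.sqrt (1 + δ) * l2norm r * l2norm e
            ≤ AMIHT.ip r b := by
          have h3 := (abs_le.1 hbr).1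
          linarith [h3, hiprr]
        have hipbΩ : AMIHT.ip r b = AMIHT.ip r (restr b (ΩT ∪ ΩM)) := by
          rw [AMIHT.ip_restr_swap r b (ΩT ∪ ΩM), hrΩ]
        have hNΩR : (1 - δ) * l2norm r ^ 2 - Real.sqrt (1 + δ) * l2norm r * l2norm e
            ≤ l2norm r * l2norm (restr b (ΩT ∪ ΩM)) := by
          have hcs := AMIHT.abs_ip_le r (restr b (ΩT ∪ ΩM))
          have h5 := le_abs_self (AMIHT.ip r (restr b (ΩT ∪ ΩM)))
          rw [hipbΩ] at hipbr
          linarith [hipbr, h5, hcs]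
        have hNΩ : (1 - δ) * l2norm r - Real.sqrt (1 + δ) * l2norm e
            ≤ l2norm (restr b (ΩT ∪ ΩM)) := by
          have h' : l2norm r * ((1 - δ) * l2norm r - Real.sqrt (1 + δ) * l2norm e)
              ≤ l2norm r * l2norm (restr b (ΩT ∪ ΩM)) := by linarith [hNΩR]
          exact le_of_mul_le_mul_left h' hRpos
        have hB : cH * ((1 - δ) * l2norm r - Real.sqrt (1 + δ) * l2norm e)
            ≤ l2norm (restr b Γ) := by
          calc cH * ((1 - δ) * l2norm r - Real.sqrt (1 + δ) * l2norm e)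
              ≤ cH * l2norm (restr b (ΩT ∪ ΩM)) := mul_le_mul_of_nonneg_left hNΩ hcH0.le
            _ ≤ l2norm (restr b Γ) := hheadΩ
        have hBpos : 0 < l2norm (restr b Γ) := by
          rcases eq_or_lt_of_le (AMIHT.l2norm_nonneg (restr b Γ)) with hz | hpos
          · exfalso
            have h1 : cH * ((1 - δ) * l2norm r - Real.sqrt (1 + δ) * l2norm e) ≤ 0 := by
              rw [← hz] at hB; linarith
            have h2 : (1 - δ) * l2norm r - Real.sqrt (1 + δ) * l2norm e ≤ 0 := by
              have h2' : cH * ((1 - δ) * l2norm r - Real.sqrt (1 + δ) * l2norm e)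
                  ≤ cH * 0 := by linarith [h1]
              exact (mul_le_mul_iff_right₀ hcH0).1 h2'
            have h2'' : (1 - δ) * l2norm r ≤ Real.sqrt (1 + δ) * l2norm e := by linarith [h2]
            have hmul := mul_le_mul_of_nonneg_left h2'' hcH0.le
            have e2 : α₀ * l2norm r = cH * ((1 - δ) * l2norm r) - δ * l2norm r := by
              rw [hα₀]; ring
            have e3 : β₀ * l2norm e
                = cH * (Real.sqrt (1 + δ) * l2norm e) + Real.sqrt (1 + δ) * l2norm e := by
              rw [hβ₀]; ring
            linarith [hmul, e2, e3, mul_nonneg hδ0 hR0, mul_nonneg hs0 hE0, hre]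
          · exact hpos
        -- lower bound on l2norm (restr r Γ)
        have hwΓ : Function.support (restr b Γ) ⊆ U :=
          subset_trans (AMIHT.supp_restr _ _) hΓU
        have hw := hmaster (restr b Γ) hwΓ
        have hipbb : AMIHT.ip (restr b Γ) b = l2norm (restr b Γ) ^ 2 := by
          rw [AMIHT.ip_restr_restr b b Γ, AMIHT.ip_self]
        have hiprΓ : AMIHT.ip (restr b Γ) r ≤ l2norm (restr b Γ) * l2norm (restr r Γ) := by
          rw [AMIHT.ip_restr_restr b r Γ]
          calc AMIHT.ip (restr b Γ) (restr r Γ)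
              ≤ |AMIHT.ip (restr b Γ) (restr r Γ)| := le_abs_self _
            _ ≤ l2norm (restr b Γ) * l2norm (restr r Γ) := AMIHT.abs_ip_le _ _
        have ht1 : l2norm (restr b Γ) ^ 2 - δ * l2norm (restr b Γ) * l2norm r
            - Real.sqrt (1 + δ) * l2norm (restr b Γ) * l2norm e
            ≤ l2norm (restr b Γ) * l2norm (restr r Γ) := by
          have h3 := (abs_le.1 hw).2
          linarith [h3, hipbb ▸ h3, hiprΓ, hipbb]
        have ht2 : l2norm (restr b Γ) - δ * l2norm r - Real.sqrt (1 + δ) * l2norm e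
            ≤ l2norm (restr r Γ) := by
          have h' : l2norm (restr b Γ)
              * (l2norm (restr b Γ) - δ * l2norm r - Real.sqrt (1 + δ) * l2norm e)
              ≤ l2norm (restr b Γ) * l2norm (restr r Γ) := by linarith [ht1]
          exact le_of_mul_le_mul_left h' hBpos
        have e1 : α₀ * l2norm r - β₀ * l2norm e
            = cH * ((1 - δ) * l2norm r - Real.sqrt (1 + δ) * l2norm e)
              - δ * l2norm r - Real.sqrt (1 + δ) * l2norm e := by
          rw [hα₀, hβ₀]; ring
        have htK : α₀ * l2norm r - β₀ * l2norm e ≤ l2norm (restr r Γ) := by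
          rw [e1]; linarith [hB, ht2]
        -- Pythagoras
        have hp := AMIHT.pyth r (Set.subset_univ Γ)
        have huniv : restr r Set.univ = r := AMIHT.restr_eq_self (Set.subset_univ _)
        have hcompl : Set.univ \ Γ = Γᶜ := by ext i; simp
        rw [hcompl, huniv] at hp
        have hKpos : 0 < α₀ * l2norm r - β₀ * l2norm e := by linarith [hre]
        have hsqb : l2norm (restr r Γᶜ) ^ 2
            ≤ l2norm r ^ 2 - (α₀ * l2norm r - β₀ * l2norm e) ^ 2 :=
          AMIHT.pyth_bound hp htK hKpos
        -- final algebra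
        have hq_ne : Real.sqrt (1 - α₀ ^ 2) ≠ 0 := ne_of_gt hqpos
        have hdiv : α₀ * β₀ / Real.sqrt (1 - α₀ ^ 2) * Real.sqrt (1 - α₀ ^ 2) = α₀ * β₀ :=
          div_mul_cancel₀ _ hq_ne
        have hmain : l2norm (restr r Γᶜ) ≤ Real.sqrt (1 - α₀ ^ 2) * l2norm r
            + α₀ * β₀ / Real.sqrt (1 - α₀ ^ 2) * l2norm e := by
          apply AMIHT.le_of_sq_le_sq (by positivity)
          have expand : (Real.sqrt (1 - α₀ ^ 2) * l2norm r
              + α₀ * β₀ / Real.sqrt (1 - α₀ ^ 2) * l2norm e) ^ 2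
              = Real.sqrt (1 - α₀ ^ 2) ^ 2 * l2norm r ^ 2
                + 2 * (α₀ * β₀ / Real.sqrt (1 - α₀ ^ 2) * Real.sqrt (1 - α₀ ^ 2))
                  * l2norm r * l2norm e
                + (α₀ * β₀ / Real.sqrt (1 - α₀ ^ 2)) ^ 2 * l2norm e ^ 2 := by ring
          rw [expand, hdiv, hq2]
          exact AMIHT.alg2 hsqb
        have hnonneg : 0 ≤ β₀ / α₀ * l2norm e := by positivity
        linarith [hmain, hnonneg]
  -- combine everything
  have h3 := hresid Γ hΓU
  have htri2 : l2norm (r - restr b Γ) ≤ l2norm (restr (r - b) Γ) + l2norm (restr r Γᶜ) := by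
    rw [hdecomp]; exact AMIHT.l2norm_add_le _ _
  have hfinal : l2norm (x - xnext)
      ≤ (1 + cT) * ((δ + Real.sqrt (1 - α₀ ^ 2)) * l2norm r
        + (β₀ / α₀ + α₀ * β₀ / Real.sqrt (1 - α₀ ^ 2) + Real.sqrt (1 + δ)) * l2norm e) := by
    calc l2norm (x - xnext) ≤ (1 + cT) * l2norm (r - restr b Γ) := hstep1
      _ ≤ (1 + cT) * ((δ + Real.sqrt (1 - α₀ ^ 2)) * l2norm r
          + (β₀ / α₀ + α₀ * β₀ / Real.sqrt (1 - α₀ ^ 2) + Real.sqrt (1 + δ)) * l2norm e) := by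
        apply mul_le_mul_of_nonneg_left ?_ (by linarith : (0:ℝ) ≤ 1 + cT)
        linarith [htri2, h3, hhead4]
  rw [← hr, hα, hβ]
  calc l2norm (x - xnext)
      ≤ (1 + cT) * ((δ + Real.sqrt (1 - α₀ ^ 2)) * l2norm r
        + (β₀ / α₀ + α₀ * β₀ / Real.sqrt (1 - α₀ ^ 2) + Real.sqrt (1 + δ)) * l2norm e) := hfinal
    _ = (1 + cT) * (δ + Real.sqrt (1 - α₀ ^ 2)) * l2norm r
        + (1 + cT) * (β₀ / α₀ + α₀ * β₀ / Real.sqrt (1 - α₀ ^ 2) + Real.sqrt (1 + δ))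
          * l2norm e := by ring
end

section
/- Let 𝕄, 𝕄_T, 𝕄_H be structured sparsity models on {1,…,n}, let 0 < c_H ≤ 1, c_T ≥ 1, ρ₀ ≥ 0, τ₀ ≥ 0 be reals, let A ∈ ℝ^{m×n}, and let med : ℝᵐ → ℝⁿ be a map satisfying: for all x' ∈ ℝⁿ, e' ∈ ℝᵐ, and S ∈ (𝕄 ⊕ 𝕄_T ⊕ 𝕄_H)⁺, ‖(x' − med(A x'_S + e'))_S‖₁ ≤ ρ₀‖x'_S‖₁ + τ₀‖e'‖₁. Let x, xⁱ ∈ ℝⁿ with supp(x) ∈ 𝕄⁺ and supp(xⁱ) ∈ 𝕄_T⁺, let e ∈ ℝᵐ, set r = x − xⁱ and v = med(Ar + e). Let Γ ∈ 𝕄_H⁺ satisfy ‖v_Γ‖₁ ≥ c_H‖v_Ω‖₁ for every Ω ∈ 𝕄_T ⊕ 𝕄, set a = xⁱ + v_Γ, and let Ω' ∈ 𝕄_T⁺ satisfy ‖a − a_{Ω'}‖₁ ≤ c_T‖a − a_Ω‖₁ for every Ω ∈ 𝕄; set x^{i+1} = a_{Ω'}. Then ‖x − x^{i+1}‖₁ ≤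 ρ‖x − xⁱ‖₁ + τ‖e‖₁, where ρ = (1+c_T)(2ρ₀ + 1 − c_H(1−ρ₀)) and τ = (1+c_T)(2+c_H)τ₀. -/
/-- The ℓ₁ norm of a vector in ℝⁿ. -/
noncomputable def l1norm {k : ℕ} (x : Fin k → ℝ) : ℝ := ∑ i, |x i|

open Classical in
lemma restr_apply {k : ℕ} (x : Fin k → ℝ) (Ω : Set (Fin k)) (i : Fin k) :
    restr x Ω i = if i ∈ Ω then x i else 0 := by
  rw [restr, Set.indicator_apply]

lemma l1norm_nonneg {k : ℕ} (x : Fin k → ℝ) : 0 ≤ l1norm x :=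
  Finset.sum_nonneg fun i _ => abs_nonneg _

lemma l1norm_mono {k : ℕ} {x y : Fin k → ℝ} (h : ∀ i, |x i| ≤ |y i|) :
    l1norm x ≤ l1norm y :=
  Finset.sum_le_sum fun i _ => h i

lemma l1norm_add_le {k : ℕ} (x y : Fin k → ℝ) : l1norm (x + y) ≤ l1norm x + l1norm y := by
  rw [l1norm, l1norm, l1norm, ← Finset.sum_add_distrib]
  exact Finset.sum_le_sum fun i _ => abs_add_le _ _

lemma l1norm_neg {k : ℕ} (x : Fin k → ℝ) : l1norm (-x) = l1norm x := by
  unfold l1norm; simp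

lemma restr_sub {k : ℕ} (x y : Fin k → ℝ) (Ω : Set (Fin k)) :
    restr (x - y) Ω = restr x Ω - restr y Ω := by
  funext i
  classical
  simp only [restr_apply, Pi.sub_apply]
  by_cases hi : i ∈ Ω <;> simp [hi]

lemma l1norm_restr_mono {k : ℕ} (x : Fin k → ℝ) {Ω S : Set (Fin k)} (h : Ω ⊆ S) :
    l1norm (restr x Ω) ≤ l1norm (restr x S) := by
  classical
  apply l1norm_mono
  intro i
  rw [restr_apply, restr_apply]
  by_cases hi : i ∈ Ω
  · simp [hi, h hi]
  · simp [hi, abs_nonneg]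

lemma restr_eq_self {k : ℕ} {x : Fin k → ℝ} {S : Set (Fin k)}
    (h : Function.support x ⊆ S) : restr x S = x := by
  classical
  funext i
  rw [restr_apply]
  by_cases hi : i ∈ S
  · simp [hi]
  · simp only [hi, if_false]
    exact (Function.support_subset_iff'.mp h i hi).symm

lemma l1norm_split {k : ℕ} (x : Fin k → ℝ) (Ω : Set (Fin k)) :
    l1norm x = l1norm (restr x Ω) + l1norm (x - restr x Ω) := by
  rw [l1norm, l1norm, l1norm, ← Finset.sum_add_distrib]
  apply Finset.sum_congr rfl
  intro i _
  classical
  simp only [restr_apply, Pi.sub_apply]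
  by_cases hi : i ∈ Ω <;> simp [hi]

theorem stmt5 {n m : ℕ}
    (M MT MH : Set (Set (Fin n)))
    (cH cT ρ₀ τ₀ : ℝ) (hcH0 : 0 < cH) (hcH1 : cH ≤ 1) (hcT : 1 ≤ cT)
    (hρ₀ : 0 ≤ ρ₀) (hτ₀ : 0 ≤ τ₀)
    (A : Matrix (Fin m) (Fin n) ℝ)
    (med : (Fin m → ℝ) → (Fin n → ℝ))
    (hmed : ∀ (x' : Fin n → ℝ) (e' : Fin m → ℝ),
      ∀ S ∈ modelPlus (modelSum (modelSum M MT) MH),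
        l1norm (restr (x' - med (A.mulVec (restr x' S) + e')) S) ≤
          ρ₀ * l1norm (restr x' S) + τ₀ * l1norm e')
    (x xi : Fin n → ℝ)
    (hx : Function.support x ∈ modelPlus M)
    (hxi : Function.support xi ∈ modelPlus MT)
    (e : Fin m → ℝ)
    (r : Fin n → ℝ) (hr : r = x - xi)
    (v : Fin n → ℝ) (hv : v = med (A.mulVec r + e))
    (Γ : Set (Fin n)) (hΓ : Γ ∈ modelPlus MH)
    (hhead : ∀ Ω ∈ modelSum MT M, l1norm (restr v Γ) ≥ cH * l1norm (restr v Ω))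
    (a : Fin n → ℝ) (ha : a = xi + restr v Γ)
    (Ω' : Set (Fin n)) (hΩ' : Ω' ∈ modelPlus MT)
    (htail : ∀ Ω ∈ M, l1norm (a - restr a Ω') ≤ cT * l1norm (a - restr a Ω))
    (xnext : Fin n → ℝ) (hxnext : xnext = restr a Ω')
    (ρ τ : ℝ)
    (hρ : ρ = (1 + cT) * (2 * ρ₀ + 1 - cH * (1 - ρ₀)))
    (hτ : τ = (1 + cT) * (2 + cH) * τ₀) :
    l1norm (x - xnext) ≤ ρ * l1norm (x - xi) + τ * l1norm e := by
  classical
  obtain ⟨Sx, hSxM, hxSx⟩ := hx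
  obtain ⟨Sxi, hSxiMT, hxiSxi⟩ := hxi
  obtain ⟨SΓ, hSΓMH, hΓSΓ⟩ := hΓ
  set Ωs : Set (Fin n) := Sxi ∪ Sx with hΩs
  set Ss : Set (Fin n) := Ωs ∪ SΓ with hSs
  have hrsupp : Function.support r ⊆ Ωs := by
    rw [hr]
    intro i hi
    refine (Function.support_sub x xi hi).elim (fun h => Or.inr (hxSx h)) (fun h => Or.inl (hxiSxi h))
  have hrsuppS : Function.support r ⊆ Ss := hrsupp.trans Set.subset_union_left
  have hSsmem : Ss ∈ modelPlus (modelSum (modelSum M MT) MH) := by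
    refine ⟨(Sx ∪ Sxi) ∪ SΓ, ⟨Sx ∪ Sxi, ⟨Sx, hSxM, Sxi, hSxiMT, rfl⟩, SΓ, hSΓMH, rfl⟩, ?_⟩
    rw [hSs, hΩs, Set.union_comm Sxi Sx]
  have hΩsmem : Ωs ∈ modelSum MT M := ⟨Sxi, hSxiMT, Sx, hSxM, rfl⟩
  -- the RIP-1 / median estimate
  have h1 := hmed r e Ss hSsmem
  rw [restr_eq_self hrsuppS, ← hv] at h1
  set E : ℝ := ρ₀ * l1norm r + τ₀ * l1norm e with hE
  have hΓε : l1norm (restr (r - v) Γ) ≤ E :=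
    le_trans (l1norm_restr_mono _ (hΓSΓ.trans Set.subset_union_right)) h1
  have hΩε : l1norm (restr (r - v) Ωs) ≤ E :=
    le_trans (l1norm_restr_mono _ Set.subset_union_left) h1
  -- lower bound on ‖v_Ωs‖
  have hrdec : restr r Ωs = restr v Ωs + restr (r - v) Ωs := by
    rw [restr_sub]; funext i; simp
  have hvΩ : l1norm r ≤ l1norm (restr v Ωs) + l1norm (restr (r - v) Ωs) := by
    calc l1norm r = l1norm (restr r Ωs) := by rw [restr_eq_self hrsupp]
    _ ≤ _ := by rw [hrdec]; exact l1norm_add_le _ _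
  -- head guarantee
  have hhead' := hhead Ωs hΩsmem
  have hvΓ : cH * (l1norm r - E) ≤ l1norm (restr v Γ) := by
    nlinarith [hcH0.le]
  -- lower bound on ‖r_Γ‖
  have hvdec : restr v Γ = restr r Γ + (-(restr (r - v) Γ)) := by
    rw [restr_sub]; funext i; simp
  have hrΓlb : l1norm (restr v Γ) - l1norm (restr (r - v) Γ) ≤ l1norm (restr r Γ) := by
    have := l1norm_add_le (restr r Γ) (-(restr (r - v) Γ))
    rw [← hvdec, l1norm_neg] at this
    linarith
  -- decompose r - v_Γ
  have hdec2 : r - restr v Γ = restr (r - v) Γ + (r - restr r Γ) := by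
    funext i
    simp only [Pi.sub_apply, Pi.add_apply, restr_apply]
    by_cases hi : i ∈ Γ <;> simp [hi]
  have hsplit := l1norm_split r Γ
  have hxa : l1norm (x - a) ≤ (1 - cH + (2 + cH) * ρ₀) * l1norm r + (2 + cH) * τ₀ * l1norm e := by
    have hxa0 : x - a = r - restr v Γ := by
      rw [ha, hr]; funext i; simp; ring
    rw [hxa0, hdec2]
    have h2 := l1norm_add_le (restr (r - v) Γ) (r - restr r Γ)
    nlinarith [l1norm_nonneg e, l1norm_nonneg r]
  -- tail guarantee
  have htail' := htail Sx hSxM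
  have haSx : l1norm (a - restr a Sx) ≤ l1norm (a - x) := by
    apply l1norm_mono
    intro i
    simp only [Pi.sub_apply, restr_apply]
    by_cases hi : i ∈ Sx
    · simp [hi, abs_nonneg]
    · have : x i = 0 := Function.support_subset_iff'.mp hxSx i hi
      simp [hi, this]
  have hax : l1norm (a - x) = l1norm (x - a) := by
    rw [← l1norm_neg (a - x)]; congr 1; funext i; simp
  have htri : l1norm (x - xnext) ≤ l1norm (x - a) + l1norm (a - restr a Ω') := by
    have : x - xnext = (x - a) + (a - restr a Ω') := by rw [hxnext]; funext i; simp
    rw [this]; exact l1norm_add_le _ _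
  have hfinal : l1norm (x - xnext) ≤ (1 + cT) * l1norm (x - a) := by
    nlinarith [l1norm_nonneg (x - a)]
  have hrx : l1norm (x - xi) = l1norm r := by rw [hr]
  rw [hrx, hρ, hτ]
  nlinarith [mul_le_mul_of_nonneg_left hxa (by linarith : (0:ℝ) ≤ 1 + cT)]
end

section
/- Let 𝕄 and 𝕄_H be structured sparsity models on {1,…,n} with 𝕄 nonempty, let p ≥ 1 and 0 < c_H ≤ 1, and let H : ℝⁿ → 𝒫({1,…,n}) satisfy: H(y) ∈ 𝕄_H⁺ and ‖y_{H(y)}‖_p ≥ c_H·‖y_Ω‖_p for every y ∈ ℝⁿ and every Ω ∈ 𝕄. Fix x ∈ ℝⁿ and t ∈ ℕ, and define Ω₀ = ∅ and Ω_i = Ω_{i−1} ∪ H(x_{Ω_{i−1}ᶜ}) for i = 1,…,t (where x_{Ω^c} denotes x with coordinates in Ω set to zero). Then Ω_t ∈ (𝕄_H^{⊕t})⁺ and ‖x_{Ω_t}‖_p ≥ (1 − (1 − c_H^p)^t)^{1/p} · max_{Ω ∈ 𝕄} ‖x_Ω‖_p. -/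
/-- The ℓ_p norm of a vector in ℝⁿ (for real `p ≥ 1`). -/
noncomputable def lpnorm {k : ℕ} (p : ℝ) (x : Fin k → ℝ) : ℝ := (∑ i, |x i| ^ p) ^ (1 / p)

/-- The `t`-fold sum `M ⊕ ⋯ ⊕ M` of a structured sparsity model with itself. -/
def iterSum {k : ℕ} (M : Set (Set (Fin k))) : ℕ → Set (Set (Fin k))
  | 0 => {∅}
  | t + 1 => modelSum (iterSum M t) M

section aux
variable {k : ℕ} (f : Fin k → ℝ)

lemma sum_ind_nonneg (hf : ∀ i, 0 ≤ f i) (A : Set (Fin k)) :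
    0 ≤ ∑ i, A.indicator f i :=
  Finset.sum_nonneg fun i _ => Set.indicator_nonneg (fun i _ => hf i) i

lemma sum_ind_mono (hf : ∀ i, 0 ≤ f i) {A B : Set (Fin k)} (h : A ⊆ B) :
    ∑ i, A.indicator f i ≤ ∑ i, B.indicator f i := by
  refine Finset.sum_le_sum fun i _ => ?_
  by_cases hA : i ∈ A
  · simp [Set.indicator, hA, h hA]
  · by_cases hB : i ∈ B <;> simp [Set.indicator, hA, hB, hf i]

lemma sum_ind_union (A B : Set (Fin k)) :
    ∑ i, (A ∪ B).indicator f i = ∑ i, A.indicator f i + ∑ i, (B \ A).indicator f i := by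
  rw [← Finset.sum_add_distrib]
  refine Finset.sum_congr rfl fun i _ => ?_
  by_cases hA : i ∈ A <;> by_cases hB : i ∈ B <;> simp [Set.indicator, hA, hB]

lemma sum_ind_split (A B : Set (Fin k)) :
    ∑ i, A.indicator f i = ∑ i, (A ∩ B).indicator f i + ∑ i, (A \ B).indicator f i := by
  rw [← Finset.sum_add_distrib]
  refine Finset.sum_congr rfl fun i _ => ?_
  by_cases hA : i ∈ A <;> by_cases hB : i ∈ B <;> simp [Set.indicator, hA, hB]

end aux

lemma restr_restr {k : ℕ} (x : Fin k → ℝ) (A S : Set (Fin k)) :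
    restr (restr x Aᶜ) S = restr x (S \ A) := by
  funext i
  by_cases hS : i ∈ S <;> by_cases hA : i ∈ A <;> simp [restr, Set.indicator, hS, hA]

lemma lpnorm_eq {k : ℕ} (p : ℝ) (hp : p ≠ 0) (x : Fin k → ℝ) (Ω : Set (Fin k)) :
    lpnorm p (restr x Ω) = (∑ i, Ω.indicator (fun i => |x i| ^ p) i) ^ (1/p) := by
  unfold lpnorm restr
  congr 1
  refine Finset.sum_congr rfl fun i _ => ?_
  by_cases h : i ∈ Ω <;> simp [Set.indicator, h, Real.zero_rpow hp]

theorem stmt6 {n : ℕ} (M MH : Set (Set (Fin n))) (hM : M.Nonempty)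
    (p cH : ℝ) (hp : 1 ≤ p) (hcH0 : 0 < cH) (hcH1 : cH ≤ 1)
    (H : (Fin n → ℝ) → Set (Fin n))
    (hH1 : ∀ y, H y ∈ modelPlus MH)
    (hH2 : ∀ y : Fin n → ℝ, ∀ Ω ∈ M, lpnorm p (restr y (H y)) ≥ cH * lpnorm p (restr y Ω))
    (x : Fin n → ℝ) (t : ℕ)
    (Om : ℕ → Set (Fin n)) (hOm0 : Om 0 = ∅)
    (hOm : ∀ i, Om (i + 1) = Om i ∪ H (restr x (Om i)ᶜ)) :
    Om t ∈ modelPlus (iterSum MH t) ∧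
    ∀ Ω ∈ M, lpnorm p (restr x (Om t)) ≥
      (1 - (1 - cH ^ p) ^ t) ^ (1 / p) * lpnorm p (restr x Ω) := by
  have hp0 : 0 < p := lt_of_lt_of_le one_pos hp
  have hpne : p ≠ 0 := ne_of_gt hp0
  set q : ℝ := cH ^ p with hq
  have hq0 : 0 < q := Real.rpow_pos_of_pos hcH0 p
  have hq1 : q ≤ 1 := Real.rpow_le_one (le_of_lt hcH0) hcH1 (le_of_lt hp0)
  set f : Fin n → ℝ := fun i => |x i| ^ p with hfdef
  have hf : ∀ i, 0 ≤ f i := fun i => Real.rpow_nonneg (abs_nonneg _) p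
  set r : Set (Fin n) → ℝ := fun A => ∑ i, A.indicator f i with hrdef
  have hr0 : ∀ A, 0 ≤ r A := fun A => sum_ind_nonneg f hf A
  constructor
  · -- membership part
    clear hH2
    induction t with
    | zero => exact ⟨∅, rfl, by rw [hOm0]⟩
    | succ i ih =>
      obtain ⟨S, hS, hsub⟩ := ih
      obtain ⟨S', hS', hsub'⟩ := hH1 (restr x (Om i)ᶜ)
      exact ⟨S ∪ S', ⟨S, hS, S', hS', rfl⟩, by
        rw [hOm i]; exact Set.union_subset_union hsub hsub'⟩
  · intro Ω hΩ
    -- key step inequality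
    have key : ∀ i, r Ω - r (Om (i+1)) ≤ (1 - q) * (r Ω - r (Om i)) := by
      intro i
      set Γ : Set (Fin n) := H (restr x (Om i)ᶜ) with hΓ
      have hunion : r (Om (i+1)) = r (Om i) + r (Γ \ Om i) := by
        rw [hOm i]; exact sum_ind_union f (Om i) Γ
      have hguar := hH2 (restr x (Om i)ᶜ) Ω hΩ
      rw [restr_restr, restr_restr, lpnorm_eq p hpne, lpnorm_eq p hpne] at hguar
      -- hguar : (r (Γ \ Om i))^(1/p) ≥ cH * (r (Ω \ Om i))^(1/p)
      have hpow : q * r (Ω \ Om i) ≤ r (Γ \ Om i) := by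
        have h1 : (cH * (r (Ω \ Om i)) ^ (1/p)) ^ p ≤ ((r (Γ \ Om i)) ^ (1/p)) ^ p := by
          refine Real.rpow_le_rpow ?_ hguar (le_of_lt hp0)
          exact mul_nonneg (le_of_lt hcH0) (Real.rpow_nonneg (hr0 _) _)
        rw [Real.mul_rpow (le_of_lt hcH0) (Real.rpow_nonneg (hr0 _) _),
            ← Real.rpow_mul (hr0 _), ← Real.rpow_mul (hr0 _),
            one_div_mul_cancel hpne, Real.rpow_one, Real.rpow_one] at h1
        exact h1
      have hsplit : r Ω = r (Ω ∩ Om i) + r (Ω \ Om i) := sum_ind_split f Ω (Om i)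
      have hmono : r (Ω ∩ Om i) ≤ r (Om i) := sum_ind_mono f hf Set.inter_subset_right
      have h2 : q * (r Ω - r (Om i)) ≤ q * r (Ω \ Om i) := by
        apply mul_le_mul_of_nonneg_left _ (le_of_lt hq0)
        linarith
      linarith
    -- induction: r Ω - r (Om t) ≤ (1-q)^t * r Ω
    have main : r Ω - r (Om t) ≤ (1 - q) ^ t * r Ω := by
      induction t with
      | zero =>
        rw [hOm0]
        have : r (∅ : Set (Fin n)) = 0 := by simp [hrdef]
        simp [this]
      | succ i ih =>
        calc r Ω - r (Om (i+1)) ≤ (1 - q) * (r Ω - r (Om i)) := key i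
          _ ≤ (1 - q) * ((1 - q) ^ i * r Ω) :=
              mul_le_mul_of_nonneg_left ih (by linarith)
          _ = (1 - q) ^ (i+1) * r Ω := by ring
    have hmain' : (1 - (1 - q) ^ t) * r Ω ≤ r (Om t) := by linarith
    have hge0 : 0 ≤ 1 - (1 - q) ^ t := by
      have : (1 - q) ^ t ≤ 1 := pow_le_one₀ (by linarith) (by linarith)
      linarith
    rw [lpnorm_eq p hpne, lpnorm_eq p hpne]
    calc (1 - (1 - q) ^ t) ^ (1/p) * (r Ω) ^ (1/p)
        = ((1 - (1 - q) ^ t) * r Ω) ^ (1/p) :=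
          (Real.mul_rpow hge0 (hr0 Ω)).symm
      _ ≤ (r (Om t)) ^ (1/p) :=
          Real.rpow_le_rpow (mul_nonneg hge0 (hr0 Ω)) hmain' (by positivity)
end

section
/- Let 𝕄 be a structured sparsity model on {1,…,n}, let p ≥ 1 and 0 < c_H ≤ 1, let x ∈ ℝⁿ, let Γ ∈ 𝕄, let Ω' ⊆ {1,…,n}, and let Λ ⊆ {1,…,n} satisfy ‖(x_{Ω'ᶜ})_Λ‖_p ≥ c_H·‖(x_{Ω'ᶜ})_Ω‖_p for every Ω ∈ 𝕄 (where x_{Ω'ᶜ} denotes x with coordinates in Ω' set to zero). Then ‖x_Γ‖_p^p − ‖x_{Ω' ∪ Λ}‖_p^p ≤ (1 − c_H^p)·(‖x_Γ‖_p^p − ‖x_{Ω'}‖_p^p). -/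
theorem stmt7 {n : ℕ} (M : Set (Set (Fin n))) (p cH : ℝ) (hp : 1 ≤ p)
    (hcH0 : 0 < cH) (hcH1 : cH ≤ 1)
    (x : Fin n → ℝ) (Γ : Set (Fin n)) (hΓ : Γ ∈ M)
    (Ω' Λ : Set (Fin n))
    (hΛ : ∀ Ω ∈ M,
      lpnorm p (restr (restr x Ω'ᶜ) Λ) ≥ cH * lpnorm p (restr (restr x Ω'ᶜ) Ω)) :
    lpnorm p (restr x Γ) ^ p - lpnorm p (restr x (Ω' ∪ Λ)) ^ p ≤
      (1 - cH ^ p) * (lpnorm p (restr x Γ) ^ p - lpnorm p (restr x Ω') ^ p) := by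
  classical
  have hp0 : (0:ℝ) < p := lt_of_lt_of_le one_pos hp
  have hne : p ≠ 0 := ne_of_gt hp0
  set g : Fin n → ℝ := fun i => |x i| ^ p with hg
  have hg0 : ∀ i, 0 ≤ g i := fun i => Real.rpow_nonneg (abs_nonneg _) p
  set F : Set (Fin n) → ℝ := fun A => ∑ i, A.indicator g i with hF
  have key : ∀ A : Set (Fin n), lpnorm p (restr x A) ^ p = F A := by
    intro A
    have h1 : ∀ i, |restr x A i| ^ p = A.indicator g i := by
      intro i
      by_cases h : i ∈ A <;>
        simp [restr, Set.indicator_of_mem, Set.indicator_of_notMem, h, hg,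
          Real.zero_rpow hne]
    have hsum0 : 0 ≤ ∑ i, |restr x A i| ^ p :=
      Finset.sum_nonneg fun i _ => Real.rpow_nonneg (abs_nonneg _) p
    rw [lpnorm, ← Real.rpow_mul hsum0, one_div, inv_mul_cancel₀ hne, Real.rpow_one]
    exact Finset.sum_congr rfl fun i _ => h1 i
  -- nested restriction
  have hnest : ∀ A : Set (Fin n), restr (restr x Ω'ᶜ) A = restr x (A ∩ Ω'ᶜ) := by
    intro A
    simp [restr, Set.indicator_indicator]
  -- lpnorm nonneg
  have hlp0 : ∀ y : Fin n → ℝ, 0 ≤ lpnorm p y := by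
    intro y
    exact Real.rpow_nonneg (Finset.sum_nonneg fun i _ =>
      Real.rpow_nonneg (abs_nonneg _) p) _
  -- split F (Ω' ∪ Λ) = F Ω' + F (Λ ∩ Ω'ᶜ)
  have hFadd : ∀ A B : Set (Fin n), Disjoint A B → F (A ∪ B) = F A + F B := by
    intro A B hAB
    simp only [hF, Set.indicator_union_of_disjoint hAB, Pi.add_apply,
      Finset.sum_add_distrib]
  have hsplit : F (Ω' ∪ Λ) = F Ω' + F (Λ ∩ Ω'ᶜ) := by
    have h1 : (Ω' ∪ Λ : Set (Fin n)) = Ω' ∪ (Λ ∩ Ω'ᶜ) := by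
      ext i; by_cases h : i ∈ Ω' <;> simp [h]
    rw [h1, hFadd _ _ (by
      rw [Set.disjoint_iff_inter_eq_empty]
      ext i; by_cases h : i ∈ Ω' <;> simp [h])]
  -- F Γ ≤ F Ω' + F (Γ ∩ Ω'ᶜ)
  have hFmono : ∀ A B : Set (Fin n), A ⊆ B → F A ≤ F B := by
    intro A B hAB
    exact Finset.sum_le_sum fun i _ => Set.indicator_le_indicator_of_subset hAB hg0 i
  have hΓsplit : F Γ ≤ F Ω' + F (Γ ∩ Ω'ᶜ) := by
    have h1 : (Γ : Set (Fin n)) = (Γ ∩ Ω') ∪ (Γ ∩ Ω'ᶜ) := by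
      ext i; by_cases h : i ∈ Ω' <;> simp [h]
    have hd : Disjoint (Γ ∩ Ω') (Γ ∩ Ω'ᶜ) := by
      rw [Set.disjoint_iff_inter_eq_empty]
      ext i; by_cases h : i ∈ Ω' <;> simp [h]
    have h2 := hFadd (Γ ∩ Ω') (Γ ∩ Ω'ᶜ) hd
    rw [← h1] at h2
    rw [h2]
    have := hFmono (Γ ∩ Ω') Ω' Set.inter_subset_right
    linarith
  -- hypothesis at Γ, raised to power p
  have hab := hΛ Γ hΓ
  rw [hnest Λ, hnest Γ] at hab
  have hcb0 : 0 ≤ cH * lpnorm p (restr x (Γ ∩ Ω'ᶜ)) :=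
    mul_nonneg hcH0.le (hlp0 _)
  have hpow : cH ^ p * F (Γ ∩ Ω'ᶜ) ≤ F (Λ ∩ Ω'ᶜ) := by
    have h1 : (cH * lpnorm p (restr x (Γ ∩ Ω'ᶜ))) ^ p ≤
        lpnorm p (restr x (Λ ∩ Ω'ᶜ)) ^ p :=
      Real.rpow_le_rpow hcb0 hab hp0.le
    rw [Real.mul_rpow hcH0.le (hlp0 _), key, key] at h1
    exact h1
  have hcp0 : (0:ℝ) ≤ cH ^ p := Real.rpow_nonneg hcH0.le p
  rw [key, key, key, hsplit]
  nlinarith [mul_nonneg hcp0 (sub_nonneg.2 hΓsplit)]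
end

section
/- Let h, w, s, B ∈ ℕ with s ≤ h, and set k = s·w. Then the number of supports in the CEMD model satisfies |𝕄_{k,B}| ≤ C(h,s)·C(B+k,k)·2^k, where C(a,b) denotes the binomial coefficient. -/
/-- The Earth Mover's Distance between two finite sets of naturals of equal
cardinality: the minimum, over bijections `π` from `A` onto `B`, of
`∑ a ∈ A, |a - π a|`. -/
noncomputable def natEMD (A B : Finset ℕ) : ℕ :=
  sInf { d : ℕ | ∃ π : ℕ → ℕ, Set.BijOn π ↑A ↑B ∧
    d = ∑ a ∈ A, ((a : ℤ) - (π a : ℤ)).natAbs }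

/-- The support of column `c` of a matrix support `Ω`: the set of rows `r`
with `(r, c) ∈ Ω`. -/
def colSupp {h w : ℕ} (Ω : Finset (Fin h × Fin w)) (c : ℕ) : Finset ℕ :=
  (Ω.filter (fun q => (q.2 : ℕ) = c)).image (fun q => (q.1 : ℕ))

/-- The support-EMD of a matrix support `Ω` (with exactly `s` entries per
column): the sum of the EMDs of consecutive column supports. -/
noncomputable def suppEMD {h w : ℕ} (Ω : Finset (Fin h × Fin w)) : ℕ :=
  ∑ c ∈ Finset.range (w - 1), natEMD (colSupp Ω c) (colSupp Ω (c + 1))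

/-- The Constrained EMD model `𝕄_{k,B}` with column sparsity `s = k/w` and
EMD budget `B`: supports in the `h × w` grid with exactly `s` entries per
column and support-EMD at most `B`. -/
noncomputable def cemdModel (h w s B : ℕ) : Set (Finset (Fin h × Fin w)) :=
  { Ω | (∀ c < w, (colSupp Ω c).card = s) ∧ suppEMD Ω ≤ B }

/-! ### Auxiliary definitions and lemmas -/

/-- The `i`-th element of a finite set of naturals, in increasing order. -/
noncomputable def eltOf (A : Finset ℕ) (i : ℕ) : ℕ := (A.sort (· ≤ ·)).getD i 0

lemma image_eltOf {s : ℕ} (A : Finset ℕ) (hA : A.card = s) :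
    (Finset.range s).image (fun i => eltOf A i) = A := by
  ext x
  simp only [Finset.mem_image, Finset.mem_range, eltOf]
  have hlen : (A.sort (· ≤ ·)).length = s := by rw [Finset.length_sort, hA]
  constructor
  · rintro ⟨i, hi, rfl⟩
    have hi' : i < (A.sort (· ≤ ·)).length := by omega
    rw [List.getD_eq_getElem _ 0 hi']
    have := List.getElem_mem hi'
    rwa [← Finset.mem_sort (· ≤ ·)]
  · intro hx
    rw [← Finset.mem_sort (α := ℕ) (· ≤ ·), List.mem_iff_getElem] at hx
    obtain ⟨i, hi, rfl⟩ := hx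
    exact ⟨i, by omega, List.getD_eq_getElem _ 0 hi⟩

lemma sum_eltOf {s : ℕ} (A : Finset ℕ) (hA : A.card = s) (f : ℕ → ℕ) :
    ∑ i ∈ Finset.range s, f (eltOf A i) = ∑ a ∈ A, f a := by
  conv_rhs => rw [← image_eltOf A hA]
  rw [Finset.sum_image]
  intro i hi j hj hij
  simp only [Finset.mem_coe, Finset.mem_range] at hi hj
  have hlen : (A.sort (· ≤ ·)).length = s := by rw [Finset.length_sort, hA]
  have hnd := Finset.sort_nodup (s := A) (r := (· ≤ ·))
  have h1 : i < (A.sort (· ≤ ·)).length := by omega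
  have h2 : j < (A.sort (· ≤ ·)).length := by omega
  simp only [eltOf, List.getD_eq_getElem _ 0 h1, List.getD_eq_getElem _ 0 h2] at hij
  exact (List.Nodup.getElem_inj_iff hnd (hi := h1) (hj := h2)).mp hij

open Classical in
/-- A choice of an EMD-optimal bijection between two finite sets of naturals. -/
noncomputable def pickPi (A B : Finset ℕ) : ℕ → ℕ :=
  if h : ∃ π : ℕ → ℕ, Set.BijOn π ↑A ↑B ∧
      natEMD A B = ∑ a ∈ A, ((a : ℤ) - (π a : ℤ)).natAbs then h.choose else id

lemma pickPi_spec (A B : Finset ℕ) (hcard : A.card = B.card) :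
    Set.BijOn (pickPi A B) ↑A ↑B ∧
      natEMD A B = ∑ a ∈ A, ((a : ℤ) - (pickPi A B a : ℤ)).natAbs := by
  have e := Finset.equivOfCardEq hcard
  set π₀ : ℕ → ℕ := fun a => if ha : a ∈ A then (e ⟨a, ha⟩ : ℕ) else a with hπ₀
  have hbij : Set.BijOn π₀ ↑A ↑B := by
    refine ⟨fun a ha => ?_, fun a ha b hb hab => ?_, fun b hb => ?_⟩
    · simp only [hπ₀, Finset.mem_coe] at ha ⊢
      rw [dif_pos ha]
      exact (e ⟨a, ha⟩).2
    · simp only [Finset.mem_coe] at ha hb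
      simp only [hπ₀, dif_pos ha, dif_pos hb] at hab
      have := e.injective (Subtype.ext hab)
      exact congrArg Subtype.val this
    · simp only [Finset.mem_coe] at hb
      refine ⟨(e.symm ⟨b, hb⟩ : ℕ), (e.symm ⟨b, hb⟩).2, ?_⟩
      simp only [hπ₀, dif_pos (e.symm ⟨b, hb⟩).2]
      have : (⟨(e.symm ⟨b, hb⟩ : ℕ), (e.symm ⟨b, hb⟩).2⟩ : {x // x ∈ A}) = e.symm ⟨b, hb⟩ :=
        Subtype.ext rfl
      rw [this, Equiv.apply_symm_apply]
  have hne : { d : ℕ | ∃ π : ℕ → ℕ, Set.BijOn π ↑A ↑B ∧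
      d = ∑ a ∈ A, ((a : ℤ) - (π a : ℤ)).natAbs }.Nonempty :=
    ⟨_, π₀, hbij, rfl⟩
  have hmem := Nat.sInf_mem hne
  have hmem' : ∃ π : ℕ → ℕ, Set.BijOn π ↑A ↑B ∧
      natEMD A B = ∑ a ∈ A, ((a : ℤ) - (π a : ℤ)).natAbs := hmem
  rw [pickPi, dif_pos hmem']
  exact hmem'.choose_spec

/-- The displacement of the `(j % s)`-th entry between column `j / s` and
column `j / s + 1`, under the chosen optimal bijections. -/
noncomputable def dispOf {h w : ℕ} (s : ℕ) (Ω : Finset (Fin h × Fin w)) (j : ℕ) : ℤ :=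
  if 0 < s ∧ j / s < w - 1 then
    (pickPi (colSupp Ω (j / s)) (colSupp Ω (j / s + 1)) (eltOf (colSupp Ω (j / s)) (j % s)) : ℤ)
      - (eltOf (colSupp Ω (j / s)) (j % s) : ℤ)
  else 0

lemma idx_div {s c i : ℕ} (hs : 0 < s) (hi : i < s) : (c * s + i) / s = c := by
  rw [mul_comm, Nat.mul_add_div hs, Nat.div_eq_of_lt hi, add_zero]

lemma idx_mod {s c i : ℕ} (hi : i < s) : (c * s + i) % s = i := by
  rw [mul_comm, Nat.mul_add_mod, Nat.mod_eq_of_lt hi]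

lemma mem_colSupp_iff {h w : ℕ} (Ω : Finset (Fin h × Fin w)) (q : Fin h × Fin w) :
    q ∈ Ω ↔ (q.1 : ℕ) ∈ colSupp Ω (q.2 : ℕ) := by
  constructor
  · intro hq
    exact Finset.mem_image.mpr ⟨q, Finset.mem_filter.mpr ⟨hq, rfl⟩, rfl⟩
  · intro hq
    obtain ⟨p, hp, hp1⟩ := Finset.mem_image.mp hq
    obtain ⟨hpΩ, hp2⟩ := Finset.mem_filter.mp hp
    have : p = q := Prod.ext (Fin.ext hp1) (Fin.ext hp2)
    exact this ▸ hpΩ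

lemma colSupp_lt {h w : ℕ} (Ω : Finset (Fin h × Fin w)) (c : ℕ) {x : ℕ}
    (hx : x ∈ colSupp Ω c) : x < h := by
  obtain ⟨p, _, hp1⟩ := Finset.mem_image.mp hx
  exact hp1 ▸ p.1.isLt

lemma colSupp_succ {h w s B : ℕ} {Ω : Finset (Fin h × Fin w)}
    (hΩ : Ω ∈ cemdModel h w s B) {c : ℕ} (hc : c < w - 1) :
    colSupp Ω (c + 1) = (Finset.range s).image
      (fun i => ((eltOf (colSupp Ω c) i : ℤ) + dispOf s Ω (c * s + i)).toNat) := by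
  rcases Nat.eq_zero_or_pos s with hs0 | hs0
  · have h1 : (colSupp Ω (c + 1)).card = s := hΩ.1 (c + 1) (by omega)
    rw [hs0] at h1 ⊢
    rw [Finset.card_eq_zero.mp h1]
    simp
  · have hcw : c < w := by omega
    have hcw1 : c + 1 < w := by omega
    have hπ := pickPi_spec (colSupp Ω c) (colSupp Ω (c + 1))
      (by rw [hΩ.1 c hcw, hΩ.1 (c + 1) hcw1])
    set π := pickPi (colSupp Ω c) (colSupp Ω (c + 1)) with hπdef
    have key : ∀ i ∈ Finset.range s,
        ((eltOf (colSupp Ω c) i : ℤ) + dispOf s Ω (c * s + i)).toNat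
          = π (eltOf (colSupp Ω c) i) := by
      intro i hi
      rw [Finset.mem_range] at hi
      rw [dispOf, if_pos ⟨hs0, by rw [idx_div hs0 hi]; exact hc⟩, idx_div hs0 hi, idx_mod hi]
      rw [← hπdef]
      have : (eltOf (colSupp Ω c) i : ℤ) + ((π (eltOf (colSupp Ω c) i) : ℤ)
          - (eltOf (colSupp Ω c) i : ℤ)) = (π (eltOf (colSupp Ω c) i) : ℤ) := by ring
      rw [this, Int.toNat_natCast]
    rw [Finset.image_congr key, show (fun i => π (eltOf (colSupp Ω c) i))
        = π ∘ (fun i => eltOf (colSupp Ω c) i) from rfl, ← Finset.image_image,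
      image_eltOf (colSupp Ω c) (hΩ.1 c hcw)]
    apply Finset.coe_injective
    rw [Finset.coe_image]
    exact (hπ.1.image_eq).symm

lemma disp_budget {h w s B : ℕ} {Ω : Finset (Fin h × Fin w)}
    (hΩ : Ω ∈ cemdModel h w s B) :
    ∑ j ∈ Finset.range (s * w), (dispOf s Ω j).natAbs ≤ B := by
  rcases Nat.eq_zero_or_pos s with hs0 | hs0
  · simp [dispOf, hs0]
  have hsub : Finset.range ((w - 1) * s) ⊆ Finset.range (s * w) := by
    apply Finset.range_subset_range.mpr; nlinarith [Nat.sub_le w 1]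
  have hvanish : ∀ j ∈ Finset.range (s * w), j ∉ Finset.range ((w - 1) * s) →
      (dispOf s Ω j).natAbs = 0 := by
    intro j _ hj
    rw [Finset.mem_range, not_lt] at hj
    have : ¬ (j / s < w - 1) := by
      rw [not_lt, Nat.le_div_iff_mul_le hs0]; exact hj
    rw [dispOf, if_neg (by tauto)]
    rfl
  rw [← Finset.sum_subset hsub hvanish]
  have hstep : ∑ j ∈ Finset.range ((w - 1) * s), (dispOf s Ω j).natAbs
      = ∑ p ∈ Finset.range (w - 1) ×ˢ Finset.range s,
          (dispOf s Ω (p.1 * s + p.2)).natAbs := by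
    refine Finset.sum_nbij' (fun j => (j / s, j % s)) (fun p => p.1 * s + p.2) ?_ ?_ ?_ ?_ ?_
    · intro j hj
      rw [Finset.mem_range] at hj
      rw [Finset.mem_product, Finset.mem_range, Finset.mem_range]
      constructor
      · rw [Nat.div_lt_iff_lt_mul hs0]; omega
      · exact Nat.mod_lt _ hs0
    · intro p hp
      rw [Finset.mem_product, Finset.mem_range, Finset.mem_range] at hp
      rw [Finset.mem_range]
      have : p.1 + 1 ≤ w - 1 := hp.1
      nlinarith [hp.2]
    · intro j _; exact Nat.div_add_mod' j s
    · intro p hp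
      rw [Finset.mem_product, Finset.mem_range, Finset.mem_range] at hp
      exact Prod.ext (idx_div hs0 hp.2) (idx_mod hp.2)
    · intro j _
      simp only
      rw [Nat.div_add_mod' j s]
  rw [hstep, Finset.sum_product]
  have hinner : ∀ c ∈ Finset.range (w - 1),
      ∑ i ∈ Finset.range s, (dispOf s Ω (c * s + i)).natAbs
        = natEMD (colSupp Ω c) (colSupp Ω (c + 1)) := by
    intro c hc
    rw [Finset.mem_range] at hc
    have hcw : c < w := by omega
    have hcw1 : c + 1 < w := by omega
    have hπ := pickPi_spec (colSupp Ω c) (colSupp Ω (c + 1))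
      (by rw [hΩ.1 c hcw, hΩ.1 (c + 1) hcw1])
    have : ∀ i ∈ Finset.range s, (dispOf s Ω (c * s + i)).natAbs
        = ((eltOf (colSupp Ω c) i : ℤ)
            - (pickPi (colSupp Ω c) (colSupp Ω (c + 1)) (eltOf (colSupp Ω c) i) : ℤ)).natAbs := by
      intro i hi
      rw [Finset.mem_range] at hi
      rw [dispOf, if_pos ⟨hs0, by rw [idx_div hs0 hi]; exact hc⟩, idx_div hs0 hi, idx_mod hi]
      omega
    rw [Finset.sum_congr rfl this,
      sum_eltOf (colSupp Ω c) (hΩ.1 c hcw)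
        (fun a => ((a : ℤ) - (pickPi (colSupp Ω c) (colSupp Ω (c + 1)) a : ℤ)).natAbs)]
    exact hπ.2.symm
  rw [Finset.sum_congr rfl hinner]
  exact hΩ.2

/-- Stars and bars: the number of `(k+1)`-tuples of naturals summing to `B`. -/
lemma card_T1 (k B : ℕ) :
    ((Fintype.piFinset fun _ : Fin (k + 1) => Finset.range (B + 1)).filter
      (fun f => ∑ i, f i = B)).card ≤ (B + k).choose k := by
  classical
  have hinj : Function.Injective (Sym.toMultiset (α := Fin (k + 1)) (n := B)) :=
    Sym.coe_injective
  have hcardsum : ∀ (p : Fin (k + 1) → ℕ) (t : Finset (Fin (k + 1))),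
      Multiset.card (∑ i ∈ t, Multiset.replicate (p i) i) = ∑ i ∈ t, p i := by
    intro p t
    induction t using Finset.induction with
    | empty => simp
    | insert _ _ h ih => rw [Finset.sum_insert h, Finset.sum_insert h, Multiset.card_add, ih,
        Multiset.card_replicate]
  calc ((Fintype.piFinset fun _ : Fin (k + 1) => Finset.range (B + 1)).filter
      (fun f => ∑ i, f i = B)).card
      ≤ ((Finset.univ : Finset (Sym (Fin (k + 1)) B)).image
          Sym.toMultiset).card := by
        apply Finset.card_le_card_of_injOn
          (fun f => ∑ i : Fin (k + 1), Multiset.replicate (f i) i)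
        · intro f hf
          rw [Finset.mem_coe, Finset.mem_filter] at hf
          have hc : Multiset.card (∑ i : Fin (k + 1), Multiset.replicate (f i) i) = B := by
            rw [hcardsum f Finset.univ]
            exact hf.2
          exact Finset.mem_image.mpr ⟨⟨_, hc⟩, Finset.mem_univ _, rfl⟩
        · intro f _ g _ hfg
          funext i
          have hcount : ∀ p : Fin (k + 1) → ℕ,
              Multiset.count i (∑ j : Fin (k + 1), Multiset.replicate (p j) j) = p i := by
            intro p
            rw [Multiset.count_sum']
            rw [Finset.sum_eq_single i]
            · simp [Multiset.count_replicate]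
            · intro b _ hb; simp [Multiset.count_replicate, hb]
            · simp
          simp only at hfg
          rw [← hcount f, ← hcount g, hfg]
    _ = (B + k).choose k := by
        rw [Finset.card_image_of_injective _ hinj, Finset.card_univ, Sym.card_sym_eq_choose,
          Fintype.card_fin]
        have h1 : k + 1 + B - 1 = B + k := by omega
        rw [h1, ← Nat.choose_symm (Nat.le_add_left k B), Nat.add_sub_cancel]

/-- The injective code of a support in the CEMD model: the first column
support, the magnitudes of the displacements (with a slack coordinate), and
the signs of the displacements. -/
noncomputable def codeOf {h w : ℕ} (s B k : ℕ) (Ω : Finset (Fin h × Fin w)) :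
    Finset ℕ × (Fin (k + 1) → ℕ) × (Fin k → Bool) :=
  (colSupp Ω 0,
    Fin.snoc (fun j : Fin k => (dispOf s Ω (j : ℕ)).natAbs)
      (B - ∑ j ∈ Finset.range k, (dispOf s Ω j).natAbs),
    fun j : Fin k => decide (0 ≤ dispOf s Ω (j : ℕ)))

theorem stmt9 (h w s B k : ℕ) (hs : s ≤ h) (hk : k = s * w) :
    (cemdModel h w s B).ncard ≤ h.choose s * (B + k).choose k * 2 ^ k := by
  classical
  rcases Nat.eq_zero_or_pos w with hw0 | hw0
  · -- degenerate case `w = 0`: the model has at most one element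
    have hsub : cemdModel h w s B ⊆ {(∅ : Finset (Fin h × Fin w))} := by
      intro Ω _
      have : Ω = ∅ := by
        apply Finset.eq_empty_of_forall_notMem
        intro q hq
        exact absurd q.2.isLt (by omega)
      simp [this]
    calc (cemdModel h w s B).ncard
        ≤ ({(∅ : Finset (Fin h × Fin w))} : Set _).ncard :=
          Set.ncard_le_ncard hsub (Set.finite_singleton _)
      _ = 1 := Set.ncard_singleton _
      _ ≤ _ := Nat.mul_pos (Nat.mul_pos (Nat.choose_pos hs)
          (Nat.choose_pos (Nat.le_add_left k B))) (pow_pos (by norm_num) k)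
  · -- main case `0 < w`
    set S := (Finset.range h).powersetCard s with hS
    set T1 := (Fintype.piFinset fun _ : Fin (k + 1) => Finset.range (B + 1)).filter
      (fun f => ∑ i, f i = B) with hT1
    set U := (Finset.univ : Finset (Fin k → Bool)) with hU
    have hbudget : ∀ Ω ∈ cemdModel h w s B,
        ∑ j ∈ Finset.range k, (dispOf s Ω j).natAbs ≤ B := by
      intro Ω hΩ; rw [hk]; exact disp_budget hΩ
    have hmaps : ∀ Ω ∈ cemdModel h w s B, codeOf s B k Ω ∈ (↑(S ×ˢ T1 ×ˢ U) :
        Set (Finset ℕ × (Fin (k + 1) → ℕ) × (Fin k → Bool))) := by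
      intro Ω hΩ
      rw [Finset.mem_coe, Finset.mem_product, Finset.mem_product]
      refine ⟨?_, ?_, Finset.mem_univ _⟩
      · exact Finset.mem_powersetCard.mpr
          ⟨fun x hx => Finset.mem_range.mpr (colSupp_lt Ω 0 hx), hΩ.1 0 hw0⟩
      · rw [hT1, Finset.mem_filter]
        have hsum : ∑ j : Fin k, (dispOf s Ω (j : ℕ)).natAbs
            = ∑ j ∈ Finset.range k, (dispOf s Ω j).natAbs :=
          Fin.sum_univ_eq_sum_range (fun j => (dispOf s Ω j).natAbs) k
        have hb := hbudget Ω hΩ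
        constructor
        · rw [Fintype.mem_piFinset]
          intro m
          refine Fin.lastCases ?_ ?_ m
          · simp only [codeOf, Fin.snoc_last]
            exact Finset.mem_range.mpr (by omega)
          · intro j
            simp only [codeOf, Fin.snoc_castSucc]
            have h1 : (dispOf s Ω (j : ℕ)).natAbs
                ≤ ∑ j ∈ Finset.range k, (dispOf s Ω j).natAbs :=
              Finset.single_le_sum (f := fun j => (dispOf s Ω j).natAbs)
                (fun _ _ => Nat.zero_le _) (Finset.mem_range.mpr j.isLt)
            exact Finset.mem_range.mpr (by omega)
        · simp only [codeOf, Fin.sum_univ_castSucc, Fin.snoc_castSucc, Fin.snoc_last]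
          rw [hsum]
          omega
    have hinj : Set.InjOn (codeOf s B k) (cemdModel h w s B) := by
      intro Ω hΩ Ω' hΩ' hFeq
      have h0 : colSupp Ω 0 = colSupp Ω' 0 := congrArg Prod.fst hFeq
      have h2 : (codeOf s B k Ω).2.1 = (codeOf s B k Ω').2.1 :=
        congrArg (fun p => p.2.1) hFeq
      have h3 : (codeOf s B k Ω).2.2 = (codeOf s B k Ω').2.2 :=
        congrArg (fun p => p.2.2) hFeq
      have hdisp : ∀ j, j < k → dispOf s Ω j = dispOf s Ω' j := by
        intro j hj
        have e1 := congrFun h2 (Fin.castSucc ⟨j, hj⟩)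
        simp only [codeOf, Fin.snoc_castSucc] at e1
        have e2 := congrFun h3 ⟨j, hj⟩
        simp only [codeOf, decide_eq_decide] at e2
        rcases le_or_gt 0 (dispOf s Ω j) with hx | hx
        · have hy := e2.mp hx
          omega
        · have hy : ¬ (0 ≤ dispOf s Ω' j) := fun hy => absurd (e2.mpr hy) (not_le.mpr hx)
          rw [not_le] at hy
          omega
      have hcols : ∀ c, c < w → colSupp Ω c = colSupp Ω' c := by
        intro c
        induction c with
        | zero => intro _; exact h0
        | succ c ih =>
          intro hc1
          have hc : c < w - 1 := by omega
          rw [colSupp_succ hΩ hc, colSupp_succ hΩ' hc, ih (by omega)]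
          apply Finset.image_congr
          intro i hi
          rw [Finset.mem_coe, Finset.mem_range] at hi
          dsimp only
          have hlt : c * s + i < k := by
            have h1 : c * s + i < (c + 1) * s := by rw [add_mul, one_mul]; omega
            have h2 : (c + 1) * s ≤ w * s := Nat.mul_le_mul_right s (by omega)
            have h3 : w * s = k := by rw [hk, mul_comm]
            omega
          rw [hdisp (c * s + i) hlt]
      ext q
      rw [mem_colSupp_iff Ω q, mem_colSupp_iff Ω' q, hcols (q.2 : ℕ) q.2.isLt]
    have hmain := Set.ncard_le_ncard_of_injOn (codeOf s B k) hmaps hinj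
      ((S ×ˢ T1 ×ˢ U).finite_toSet)
    rw [Set.ncard_coe_finset, Finset.card_product, Finset.card_product] at hmain
    refine hmain.trans ?_
    have hScard : S.card = h.choose s := by
      rw [hS, Finset.card_powersetCard, Finset.card_range]
    have hUcard : U.card = 2 ^ k := by
      rw [hU, Finset.card_univ, Fintype.card_fun, Fintype.card_bool, Fintype.card_fin]
    calc S.card * (T1.card * U.card)
        ≤ h.choose s * ((B + k).choose k * 2 ^ k) := by
          rw [hScard, hUcard]
          exact Nat.mul_le_mul_left _ (Nat.mul_le_mul_right _ (card_T1 k B))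
      _ = h.choose s * (B + k).choose k * 2 ^ k := by ring
end

section
/- Let h, w ∈ ℕ, let k₁, k₂ be multiples of w with (k₁+k₂)/w ≤ h, and let B₁, B₂ ∈ ℕ. If Ω₁ ∈ 𝕄_{k₁,B₁} and Ω₂ ∈ 𝕄_{k₂,B₂} (supports in the same h×w grid), then Ω₁ ∪ Ω₂ ∈ 𝕄⁺_{k₁+k₂, B₁+B₂}; that is, there exists a support Γ ⊇ Ω₁ ∪ Ω₂ with exactly (k₁+k₂)/w entries in every column and EMD(Γ) ≤ B₁ + B₂. -/
namespace Stmt10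
open Finset

def cnt (A : Finset ℕ) (t : ℕ) : ℕ := (A.filter (· < t)).card

def dd (h : ℕ) (f g : ℕ → ℕ) : ℕ :=
  ∑ t ∈ Finset.range (h+1), ((f t : ℤ) - (g t : ℤ)).natAbs

lemma cnt_zero (A : Finset ℕ) : cnt A 0 = 0 := by simp [cnt]

lemma cnt_mono (A : Finset ℕ) {s t : ℕ} (hst : s ≤ t) : cnt A s ≤ cnt A t := by
  apply Finset.card_le_card
  intro a ha
  simp only [Finset.mem_filter] at ha ⊢
  exact ⟨ha.1, lt_of_lt_of_le ha.2 hst⟩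

lemma cnt_le_card (A : Finset ℕ) (t : ℕ) : cnt A t ≤ A.card :=
  Finset.card_filter_le _ _

lemma cnt_succ (A : Finset ℕ) (t : ℕ) :
    cnt A (t+1) = cnt A t + if t ∈ A then 1 else 0 := by
  classical
  unfold cnt
  have h1 : A.filter (· < t + 1) = A.filter (· < t) ∪ A.filter (· = t) := by
    ext a; simp only [Finset.mem_filter, Finset.mem_union]
    constructor
    · rintro ⟨ha, h2⟩
      rcases Nat.lt_succ_iff_lt_or_eq.mp h2 with h | h
      · exact Or.inl ⟨ha, h⟩
      · exact Or.inr ⟨ha, h⟩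
    · rintro (⟨ha, h2⟩ | ⟨ha, h2⟩) <;> exact ⟨ha, by omega⟩
  rw [h1, Finset.card_union_of_disjoint]
  · congr 1
    rw [Finset.filter_eq']
    split_ifs <;> simp
  · rw [Finset.disjoint_left]
    intro a ha hb
    simp only [Finset.mem_filter] at ha hb; omega

lemma cnt_eq_card (A : Finset ℕ) {h t : ℕ} (hA : A ⊆ Finset.range h) (ht : h ≤ t) :
    cnt A t = A.card := by
  unfold cnt
  congr 1
  apply Finset.filter_true_of_mem
  intro a ha
  have := hA ha
  simp only [Finset.mem_range] at this
  omega

lemma cnt_insert {A : Finset ℕ} {a : ℕ} (ha : a ∉ A) (t : ℕ) :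
    cnt (insert a A) t = cnt A t + if a < t then 1 else 0 := by
  classical
  unfold cnt
  rw [Finset.filter_insert]
  split_ifs with hlt
  · rw [Finset.card_insert_of_notMem (by simp [ha])]
  · simp

lemma cnt_eq_sum_ind (A : Finset ℕ) (t : ℕ) :
    (cnt A t : ℤ) = ∑ a ∈ A, (if a < t then (1:ℤ) else 0) := by
  unfold cnt
  rw [Finset.card_filter]
  push_cast
  rfl

lemma sum_ind (h a b : ℕ) (ha : a ≤ h) (hb : b ≤ h) :
    ∑ t ∈ Finset.range (h+1),
      ((if a < t then (1:ℤ) else 0) - (if b < t then 1 else 0)).natAbs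
    = ((a:ℤ) - b).natAbs := by
  classical
  have step : ∀ t ∈ Finset.range (h+1),
      ((if a < t then (1:ℤ) else 0) - (if b < t then 1 else 0)).natAbs
      = if t ∈ Finset.Ioc (min a b) (max a b) then 1 else 0 := by
    intro t _
    simp only [Finset.mem_Ioc]
    split_ifs <;> omega
  rw [Finset.sum_congr rfl step]
  rw [Finset.sum_ite_mem]
  have hinter : Finset.range (h+1) ∩ Finset.Ioc (min a b) (max a b)
      = Finset.Ioc (min a b) (max a b) := by
    apply Finset.inter_eq_right.mpr
    intro t ht
    simp only [Finset.mem_Ioc] at ht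
    simp only [Finset.mem_range]
    omega
  rw [hinter]
  simp [Nat.card_Ioc]
  omega


def SetCDF (h s : ℕ) (f : ℕ → ℕ) : Prop :=
  f 0 = 0 ∧ (∀ t, f t ≤ f (t+1)) ∧ (∀ t, f (t+1) ≤ f t + 1) ∧ f h = s

def ValidK (h s : ℕ) (g : ℕ → ℕ) : Prop :=
  g 0 = 0 ∧ (∀ t, g t ≤ g (t+1)) ∧ g h = s

def Fits (h : ℕ) (f g : ℕ → ℕ) : Prop :=
  ∀ t < h, g t < g (t+1) → f t < f (t+1)


lemma natAbs_sum_le {α : Type*} (s : Finset α) (f : α → ℤ) :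
    (∑ i ∈ s, f i).natAbs ≤ ∑ i ∈ s, (f i).natAbs := by
  classical
  induction s using Finset.cons_induction with
  | empty => simp
  | cons a s ha ih =>
    rw [Finset.sum_cons, Finset.sum_cons]
    exact le_trans (Int.natAbs_add_le _ _) (by omega)

lemma dd_le_cost {h : ℕ} {A B : Finset ℕ} (hA : A ⊆ Finset.range h)
    (hB : B ⊆ Finset.range h) {π : ℕ → ℕ} (hbij : Set.BijOn π ↑A ↑B) :
    dd h (cnt A) (cnt B) ≤ ∑ a ∈ A, ((a:ℤ) - (π a : ℤ)).natAbs := by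
  classical
  have hmaps : ∀ a ∈ A, π a ∈ B := fun a ha => hbij.mapsTo ha
  have hsum : ∀ t : ℕ, (cnt B t : ℤ) = ∑ a ∈ A, (if π a < t then (1:ℤ) else 0) := by
    intro t
    rw [cnt_eq_sum_ind]
    refine (Finset.sum_bij (fun a _ => π a) (fun a ha => hmaps a ha) ?_ ?_ ?_).symm
    · intro a ha a' ha' hEq
      exact hbij.injOn ha ha' hEq
    · intro b hb
      obtain ⟨a, ha, hEq⟩ := hbij.surjOn hb
      exact ⟨a, ha, hEq⟩
    · intro a _; rfl
  calc dd h (cnt A) (cnt B)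
      = ∑ t ∈ Finset.range (h+1),
          (∑ a ∈ A, ((if a < t then (1:ℤ) else 0) - (if π a < t then 1 else 0))).natAbs := by
        unfold dd
        refine Finset.sum_congr rfl fun t _ => ?_
        rw [cnt_eq_sum_ind, hsum, ← Finset.sum_sub_distrib]
    _ ≤ ∑ t ∈ Finset.range (h+1), ∑ a ∈ A,
          ((if a < t then (1:ℤ) else 0) - (if π a < t then 1 else 0)).natAbs := by
        refine Finset.sum_le_sum fun t _ => ?_
        exact natAbs_sum_le _ _
    _ = ∑ a ∈ A, ∑ t ∈ Finset.range (h+1),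
          ((if a < t then (1:ℤ) else 0) - (if π a < t then 1 else 0)).natAbs :=
        Finset.sum_comm
    _ = ∑ a ∈ A, ((a:ℤ) - (π a : ℤ)).natAbs := by
        refine Finset.sum_congr rfl fun a ha => ?_
        have h1 : a ≤ h := by have := hA ha; simp [Finset.mem_range] at this; omega
        have h2 : π a ≤ h := by
          have := hB (hmaps a ha); simp [Finset.mem_range] at this; omega
        exact sum_ind h a (π a) h1 h2

lemma dd_split {h : ℕ} {A B : Finset ℕ} {n : ℕ} (hA : A ⊆ Finset.range h)
    (hB : B ⊆ Finset.range h) (hAne : A.Nonempty) (hBne : B.Nonempty)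
    (hcA : A.card = n + 1) (hcB : B.card = n + 1) :
    dd h (cnt A) (cnt B)
      = ((A.max' hAne : ℤ) - (B.max' hBne : ℤ)).natAbs
        + dd h (cnt (A.erase (A.max' hAne))) (cnt (B.erase (B.max' hBne))) := by
  classical
  set a0 := A.max' hAne
  set b0 := B.max' hBne
  have ha0 : a0 ∈ A := A.max'_mem hAne
  have hb0 : b0 ∈ B := B.max'_mem hBne
  have hA' : insert a0 (A.erase a0) = A := Finset.insert_erase ha0
  have hB' : insert b0 (B.erase b0) = B := Finset.insert_erase hb0
  have hcA' : (A.erase a0).card = n := by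
    rw [Finset.card_erase_of_mem ha0, hcA]; omega
  have hcB' : (B.erase b0).card = n := by
    rw [Finset.card_erase_of_mem hb0, hcB]; omega
  have key : ∀ t ∈ Finset.range (h+1),
      ((cnt A t : ℤ) - cnt B t).natAbs
      = ((if a0 < t then (1:ℤ) else 0) - (if b0 < t then 1 else 0)).natAbs
        + ((cnt (A.erase a0) t : ℤ) - cnt (B.erase b0) t).natAbs := by
    intro t _
    have e1 : cnt A t = cnt (A.erase a0) t + if a0 < t then 1 else 0 := by
      conv_lhs => rw [← hA']
      exact cnt_insert (Finset.notMem_erase _ _) t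
    have e2 : cnt B t = cnt (B.erase b0) t + if b0 < t then 1 else 0 := by
      conv_lhs => rw [← hB']
      exact cnt_insert (Finset.notMem_erase _ _) t
    have fA : a0 < t → cnt (A.erase a0) t = n := by
      intro hlt
      rw [show cnt (A.erase a0) t = (A.erase a0).card from ?_, hcA']
      unfold cnt
      congr 1
      apply Finset.filter_true_of_mem
      intro x hx
      have hxA : x ∈ A := Finset.mem_of_mem_erase hx
      have := A.le_max' x hxA
      omega
    have fB : b0 < t → cnt (B.erase b0) t = n := by
      intro hlt
      rw [show cnt (B.erase b0) t = (B.erase b0).card from ?_, hcB']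
      unfold cnt
      congr 1
      apply Finset.filter_true_of_mem
      intro x hx
      have hxB : x ∈ B := Finset.mem_of_mem_erase hx
      have := B.le_max' x hxB
      omega
    have gA : cnt (A.erase a0) t ≤ n := by
      have := cnt_le_card (A.erase a0) t; omega
    have gB : cnt (B.erase b0) t ≤ n := by
      have := cnt_le_card (B.erase b0) t; omega
    rw [e1, e2]
    split_ifs with h1 h2 h2
    · push_cast; omega
    · have := fA h1; push_cast; omega
    · have := fB h2; push_cast; omega
    · push_cast; omega
  unfold dd
  rw [Finset.sum_congr rfl key, Finset.sum_add_distrib]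
  congr 1
  have h1 : a0 ≤ h := by
    have := hA ha0; simp [Finset.mem_range] at this; omega
  have h2 : b0 ≤ h := by
    have := hB hb0; simp [Finset.mem_range] at this; omega
  exact sum_ind h a0 b0 h1 h2


lemma exists_bij (h : ℕ) : ∀ (n : ℕ) (A B : Finset ℕ), A.card = n → B.card = n →
    A ⊆ Finset.range h → B ⊆ Finset.range h →
    ∃ π : ℕ → ℕ, Set.BijOn π ↑A ↑B ∧
      ∑ a ∈ A, ((a:ℤ) - (π a : ℤ)).natAbs = dd h (cnt A) (cnt B) := by
  intro n
  induction n with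
  | zero =>
    intro A B hcA hcB _ _
    have hAe : A = ∅ := Finset.card_eq_zero.mp hcA
    have hBe : B = ∅ := Finset.card_eq_zero.mp hcB
    subst hAe; subst hBe
    refine ⟨id, ?_, ?_⟩
    · simp
    · unfold dd cnt
      simp
  | succ n ih =>
    intro A B hcA hcB hA hB
    have hAne : A.Nonempty := Finset.card_pos.mp (by omega)
    have hBne : B.Nonempty := Finset.card_pos.mp (by omega)
    set a0 := A.max' hAne with ha0def
    set b0 := B.max' hBne with hb0def
    have ha0 : a0 ∈ A := A.max'_mem hAne
    have hb0 : b0 ∈ B := B.max'_mem hBne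
    obtain ⟨π', hbij', hcost'⟩ := ih (A.erase a0) (B.erase b0)
      (by rw [Finset.card_erase_of_mem ha0, hcA]; omega)
      (by rw [Finset.card_erase_of_mem hb0, hcB]; omega)
      (fun x hx => hA (Finset.mem_of_mem_erase hx))
      (fun x hx => hB (Finset.mem_of_mem_erase hx))
    classical
    refine ⟨fun x => if x = a0 then b0 else π' x, ?_, ?_⟩
    · constructor
      · intro x hx
        simp only [Finset.coe_insert, Set.mem_insert_iff, Finset.mem_coe] at hx ⊢
        by_cases hxa : x = a0
        · simp [hxa, hb0]
        · simp only [hxa, if_false]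
          have hx' : x ∈ A.erase a0 := Finset.mem_erase.mpr ⟨hxa, hx⟩
          exact Finset.mem_of_mem_erase (hbij'.mapsTo hx')
      constructor
      · intro x hx y hy hxy
        simp only [Finset.mem_coe] at hx hy
        by_cases hxa : x = a0 <;> by_cases hya : y = a0
        · rw [hxa, hya]
        · exfalso
          simp only [hxa, if_pos rfl, hya, if_false] at hxy
          have hy' : y ∈ A.erase a0 := Finset.mem_erase.mpr ⟨hya, hy⟩
          have : π' y ∈ B.erase b0 := hbij'.mapsTo hy'
          rw [← hxy] at this
          exact (Finset.notMem_erase _ _) this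
        · exfalso
          simp only [hya, if_pos rfl, hxa, if_false] at hxy
          have hx' : x ∈ A.erase a0 := Finset.mem_erase.mpr ⟨hxa, hx⟩
          have : π' x ∈ B.erase b0 := hbij'.mapsTo hx'
          rw [hxy] at this
          exact (Finset.notMem_erase _ _) this
        · simp only [hxa, hya, if_false] at hxy
          exact hbij'.injOn (Finset.mem_erase.mpr ⟨hxa, hx⟩)
            (Finset.mem_erase.mpr ⟨hya, hy⟩) hxy
      · intro b hb
        simp only [Finset.mem_coe] at hb
        by_cases hbb : b = b0
        · exact ⟨a0, by simp [ha0], by simp [hbb]⟩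
        · have hb' : b ∈ B.erase b0 := Finset.mem_erase.mpr ⟨hbb, hb⟩
          obtain ⟨a, ha, hEq⟩ := hbij'.surjOn hb'
          simp only [Finset.coe_erase, Set.mem_diff, Finset.mem_coe] at ha
          refine ⟨a, by simp [ha.1], ?_⟩
          have hane : a ≠ a0 := by
            intro hcon
            exact ha.2 (by simp [hcon])
          simp only [hane, if_false]
          exact hEq
    · rw [dd_split hA hB hAne hBne hcA hcB]
      rw [← ha0def, ← hb0def, ← hcost']
      have hsplit : A = insert a0 (A.erase a0) := (Finset.insert_erase ha0).symm
      conv_lhs => rw [hsplit]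
      rw [Finset.sum_insert (Finset.notMem_erase _ _)]
      simp only [if_pos rfl]
      congr 1
      refine Finset.sum_congr rfl fun x hx => ?_
      have : x ≠ a0 := (Finset.mem_erase.mp hx).1
      simp [this]

lemma natEMD_eq_dd {h : ℕ} {A B : Finset ℕ} (hA : A ⊆ Finset.range h)
    (hB : B ⊆ Finset.range h) (hc : A.card = B.card) :
    natEMD A B = dd h (cnt A) (cnt B) := by
  obtain ⟨π, hbij, hcost⟩ := exists_bij h A.card A B rfl hc.symm hA hB
  have hne : { d : ℕ | ∃ π : ℕ → ℕ, Set.BijOn π ↑A ↑B ∧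
      d = ∑ a ∈ A, ((a : ℤ) - (π a : ℤ)).natAbs }.Nonempty :=
    ⟨_, π, hbij, rfl⟩
  apply le_antisymm
  · calc natEMD A B ≤ ∑ a ∈ A, ((a : ℤ) - (π a : ℤ)).natAbs :=
        Nat.sInf_le ⟨π, hbij, rfl⟩
      _ = dd h (cnt A) (cnt B) := hcost
  · have hmem := Nat.sInf_mem hne
    obtain ⟨π₀, hbij₀, heq₀⟩ := hmem
    rw [natEMD] at *
    rw [heq₀]
    exact dd_le_cost hA hB hbij₀


lemma SL (h s : ℕ) (K Hp : ℕ → ℕ)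
    (hK0 : K 0 = 0) (hKm : ∀ t, K t ≤ K (t+1)) (hKh : K h = s)
    (hP0 : Hp 0 = 0) (hPl : ∀ t, Hp (t+1) ≤ Hp t + 1)
    (hPh : Hp h = s) :
    ∃ H : ℕ → ℕ, H 0 = 0 ∧ (∀ t, H t ≤ H (t+1)) ∧ (∀ t, H (t+1) ≤ H t + 1)
      ∧ H h = s ∧ (∀ t < h, K t < K (t+1) → H t < H (t+1))
      ∧ (∀ t ≤ h, min (K t) (Hp t) ≤ H t ∧ H t ≤ max (K t) (Hp t)) := by
  classical
  set e : ℕ → ℤ := fun t => if K t < K (t+1) then 1 else 0 with he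
  set R : ℕ → ℤ := fun t => ∑ a ∈ Finset.range t, e a with hR
  set m : ℕ → ℤ := fun t => min (K t : ℤ) (Hp t : ℤ) with hm
  set Mx : ℕ → ℤ := fun t => max (K t : ℤ) (Hp t : ℤ) with hMx
  have he01 : ∀ t, 0 ≤ e t ∧ e t ≤ 1 := by
    intro t; simp only [he]; split_ifs <;> simp
  have hRsucc : ∀ t, R (t+1) = R t + e t := by
    intro t; simp only [hR]; rw [Finset.sum_range_succ]
  have hR0 : R 0 = 0 := by simp [hR]
  have hRlip : ∀ a b, a ≤ b → R b - R a ≤ (b : ℤ) - a := by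
    have key : ∀ a t, R (a + t) - R a ≤ (t : ℤ) := by
      intro a t
      induction t with
      | zero => simp
      | succ t ih =>
        rw [show a + (t+1) = (a+t)+1 by omega, hRsucc]
        have := (he01 (a+t)).2
        push_cast; push_cast at ih; omega
    intro a b hab
    have := key a (b - a)
    rw [show a + (b - a) = b by omega] at this
    push_cast at this ⊢; omega
  have hKR : ∀ a b, a ≤ b → (K a : ℤ) + (R b - R a) ≤ K b := by
    have key : ∀ a t, (K a : ℤ) + (R (a + t) - R a) ≤ K (a + t) := by
      intro a t
      induction t with
      | zero => simp
      | succ t ih =>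
        rw [show a + (t+1) = (a+t)+1 by omega, hRsucc]
        have h2 : (K (a+t) : ℤ) + e (a+t) ≤ K ((a+t)+1) := by
          simp only [he]
          split_ifs with hc
          · have : K (a+t) + 1 ≤ K ((a+t)+1) := hc
            push_cast; omega
          · have := hKm (a+t); push_cast; omega
        omega
    intro a b hab
    have := key a (b - a)
    rwa [show a + (b - a) = b by omega] at this
  have hRK : ∀ b, R b ≤ K b := by
    intro b
    have := hKR 0 b (by omega)
    rw [hR0, hK0] at this
    push_cast at this; omega
  have hPlip : ∀ a b, a ≤ b → (Hp b : ℤ) ≤ Hp a + ((b:ℤ) - a) := by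
    have key : ∀ a t, (Hp (a + t) : ℤ) ≤ Hp a + t := by
      intro a t
      induction t with
      | zero => simp
      | succ t ih =>
        rw [show a + (t+1) = (a+t)+1 by omega]
        have := hPl (a+t)
        push_cast; push_cast at ih this; omega
    intro a b hab
    have := key a (b - a)
    rw [show a + (b - a) = b by omega] at this
    push_cast at this ⊢; omega
  have hPle : ∀ b : ℕ, (Hp b : ℤ) ≤ b := by
    intro b
    have := hPlip 0 b (by omega)
    rw [hP0] at this; push_cast at this; omega
  set lo : ℕ → ℤ := fun t =>
    (insert h (Finset.Icc t h)).sup' (Finset.insert_nonempty _ _)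
      (fun a => m a - ((a : ℤ) - t)) with hlo
  set hi : ℕ → ℤ := fun t =>
    (insert h (Finset.Icc t h)).inf' (Finset.insert_nonempty _ _)
      (fun b => Mx b - R b + R t) with hhi
  -- characterization lemmas
  have hlo_ub : ∀ {t : ℕ} {c : ℤ}, t ≤ h →
      (∀ a, t ≤ a → a ≤ h → m a - ((a : ℤ) - t) ≤ c) → lo t ≤ c := by
    intro t c ht hc
    simp only [hlo]
    apply Finset.sup'_le
    intro a haMem
    rcases Finset.mem_insert.mp haMem with hEq | hIn
    · subst hEq; exact hc _ ht (le_refl _)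
    · obtain ⟨h1, h2⟩ := Finset.mem_Icc.mp hIn
      exact hc _ h1 h2
  have hlo_lb : ∀ {t a : ℕ}, t ≤ a → a ≤ h → m a - ((a : ℤ) - t) ≤ lo t := by
    intro t a hta hah
    simp only [hlo]
    exact Finset.le_sup' (f := fun a => m a - ((a : ℤ) - t))
      (Finset.mem_insert.mpr (Or.inr (Finset.mem_Icc.mpr ⟨hta, hah⟩)))
  have hhi_lb : ∀ {t : ℕ} {c : ℤ}, t ≤ h →
      (∀ b, t ≤ b → b ≤ h → c ≤ Mx b - R b + R t) → c ≤ hi t := by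
    intro t c ht hc
    simp only [hhi]
    apply Finset.le_inf'
    intro b hbMem
    rcases Finset.mem_insert.mp hbMem with hEq | hIn
    · subst hEq; exact hc _ ht (le_refl _)
    · obtain ⟨h1, h2⟩ := Finset.mem_Icc.mp hIn
      exact hc _ h1 h2
  have hhi_ub : ∀ {t b : ℕ}, t ≤ b → b ≤ h → hi t ≤ Mx b - R b + R t := by
    intro t b htb hbh
    simp only [hhi]
    exact Finset.inf'_le (f := fun b => Mx b - R b + R t)
      (Finset.mem_insert.mpr (Or.inr (Finset.mem_Icc.mpr ⟨htb, hbh⟩)))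
  have hfeas : ∀ t ≤ h, lo t ≤ hi t := by
    intro t ht
    apply hlo_ub ht
    intro a hta hah
    apply hhi_lb ht
    intro b htb hbh
    rcases le_total a b with hab | hba
    · have h1 : m a ≤ (K a : ℤ) := min_le_left _ _
      have h2 := hKR a b hab
      have h3 := hRlip t a hta
      have h4 : (K b : ℤ) ≤ Mx b := le_max_left _ _
      omega
    · have h1 : m a ≤ (Hp a : ℤ) := min_le_right _ _
      have h2 := hPlip b a hba
      have h3 : (Hp b : ℤ) ≤ Mx b := le_max_right _ _
      have h4 := hRlip t b htb
      omega
  have hlo_ge : ∀ t ≤ h, m t ≤ lo t := by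
    intro t ht
    have := hlo_lb (le_refl t) ht
    simpa using this
  have hhi_le : ∀ t ≤ h, hi t ≤ Mx t := by
    intro t ht
    have := hhi_ub (le_refl t) ht
    simpa using this
  have hlo_succ : ∀ t, t < h → lo (t+1) ≤ lo t + 1 := by
    intro t ht
    apply hlo_ub (by omega)
    intro a hta hah
    have := hlo_lb (show t ≤ a by omega) hah
    push_cast
    push_cast at this
    omega
  have hhi_succ : ∀ t, t < h → hi t + e t ≤ hi (t+1) := by
    intro t ht
    apply hhi_lb (by omega)
    intro b htb hbh
    have := hhi_ub (show t ≤ b by omega) hbh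
    have := hRsucc t
    omega
  have hlo0 : lo 0 ≤ 0 := by
    apply hlo_ub (by omega)
    intro a _ hah
    have h1 : m a ≤ (Hp a : ℤ) := min_le_right _ _
    have h2 := hPle a
    push_cast
    omega
  have hhi0 : 0 ≤ hi 0 := by
    apply hhi_lb (by omega)
    intro b _ hbh
    have h1 := hRK b
    have h2 : (K b : ℤ) ≤ Mx b := le_max_left _ _
    rw [hR0]
    omega
  set Hz : ℕ → ℤ := fun t => Nat.rec (0 : ℤ)
    (fun t ih => if t + 1 ≤ h then max (lo (t+1)) (min (hi (t+1)) (ih + e t)) else ih) t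
    with hHz
  have hHz0 : Hz 0 = 0 := rfl
  have hHzsucc : ∀ t, t + 1 ≤ h →
      Hz (t+1) = max (lo (t+1)) (min (hi (t+1)) (Hz t + e t)) := by
    intro t ht
    simp only [hHz]
    rw [if_pos ht]
  have hHzstop : ∀ t, ¬ (t + 1 ≤ h) → Hz (t+1) = Hz t := by
    intro t ht
    simp only [hHz]
    rw [if_neg ht]
  have hband : ∀ t ≤ h, lo t ≤ Hz t ∧ Hz t ≤ hi t := by
    intro t
    induction t with
    | zero => intro _; rw [hHz0]; exact ⟨hlo0, hhi0⟩
    | succ t iht =>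
      intro ht
      obtain ⟨ih1, ih2⟩ := iht (by omega)
      rw [hHzsucc t ht]
      exact ⟨le_max_left _ _, max_le (hfeas (t+1) ht) (min_le_left _ _)⟩
  have hstep : ∀ t, t < h → Hz t + e t ≤ Hz (t+1) ∧ Hz (t+1) ≤ Hz t + 1 := by
    intro t ht
    obtain ⟨hb1, hb2⟩ := hband t (by omega)
    rw [hHzsucc t (by omega)]
    constructor
    · have h1 : Hz t + e t ≤ hi (t+1) := le_trans (by have := hhi_succ t ht; omega) (le_refl _)
      have h2 : min (hi (t+1)) (Hz t + e t) = Hz t + e t := min_eq_right h1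
      rw [h2]
      exact le_max_right _ _
    · apply max_le
      · have := hlo_succ t ht; omega
      · have := (he01 t).2
        have := min_le_right (hi (t+1)) (Hz t + e t)
        omega
  have hmono : ∀ t, Hz t ≤ Hz (t+1) := by
    intro t
    by_cases ht : t + 1 ≤ h
    · have h1 := (hstep t (by omega)).1
      have h2 := (he01 t).1
      omega
    · rw [hHzstop t ht]
  have hlip : ∀ t, Hz (t+1) ≤ Hz t + 1 := by
    intro t
    by_cases ht : t + 1 ≤ h
    · exact (hstep t (by omega)).2
    · rw [hHzstop t ht]; omega
  have hnonneg : ∀ t, 0 ≤ Hz t := by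
    intro t
    induction t with
    | zero => rw [hHz0]
    | succ t iht => exact le_trans iht (hmono t)
  have hbetween : ∀ t ≤ h, m t ≤ Hz t ∧ Hz t ≤ Mx t := by
    intro t ht
    obtain ⟨hb1, hb2⟩ := hband t ht
    exact ⟨le_trans (hlo_ge t ht) hb1, le_trans hb2 (hhi_le t ht)⟩
  have hHzh : Hz h = s := by
    obtain ⟨hb1, hb2⟩ := hbetween h (le_refl _)
    have h1 : m h = (s : ℤ) := by simp [hm, hKh, hPh]
    have h2 : Mx h = (s : ℤ) := by simp [hMx, hKh, hPh]
    omega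
  have hforce : ∀ t < h, K t < K (t+1) → Hz t < Hz (t+1) := by
    intro t ht hKlt
    have h1 : e t = 1 := by simp only [he]; rw [if_pos hKlt]
    have := (hstep t ht).1
    omega
  have hcast : ∀ u, ((Hz u).toNat : ℤ) = Hz u := fun u => Int.toNat_of_nonneg (hnonneg u)
  refine ⟨fun t => (Hz t).toNat, ?_, ?_, ?_, ?_, ?_, ?_⟩
  · show (Hz 0).toNat = 0
    rw [hHz0]; rfl
  · intro t
    show (Hz t).toNat ≤ (Hz (t+1)).toNat
    have := hmono t
    have := hcast t
    have := hcast (t+1)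
    omega
  · intro t
    show (Hz (t+1)).toNat ≤ (Hz t).toNat + 1
    have := hlip t
    have := hcast t
    have := hcast (t+1)
    omega
  · show (Hz h).toNat = s
    rw [hHzh]; simp
  · intro t ht hKlt
    show (Hz t).toNat < (Hz (t+1)).toNat
    have := hforce t ht hKlt
    have := hcast t
    have := hcast (t+1)
    omega
  · intro t ht
    obtain ⟨hb1, hb2⟩ := hbetween t ht
    simp only [hm, hMx] at hb1 hb2
    have h1 := hcast t
    constructor
    · show min (K t) (Hp t) ≤ (Hz t).toNat
      have h2 : (min (K t) (Hp t) : ℤ) ≤ Hz t := by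
        push_cast
        exact hb1
      omega
    · show (Hz t).toNat ≤ max (K t) (Hp t)
      have h2 : (Hz t : ℤ) ≤ (max (K t) (Hp t) : ℤ) := by
        push_cast
        exact hb2
      omega


lemma dd_symm (h : ℕ) (f g : ℕ → ℕ) : dd h f g = dd h g f := by
  unfold dd
  refine Finset.sum_congr rfl fun t _ => ?_
  omega

lemma dd_triangle (h : ℕ) (f g k : ℕ → ℕ) : dd h f k ≤ dd h f g + dd h g k := by
  unfold dd
  rw [← Finset.sum_add_distrib]
  refine Finset.sum_le_sum fun t _ => ?_
  omega

lemma dd_between {h : ℕ} {x y z : ℕ → ℕ}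
    (hb : ∀ t ≤ h, min (y t) (z t) ≤ x t ∧ x t ≤ max (y t) (z t)) :
    dd h y x + dd h x z = dd h y z := by
  unfold dd
  rw [← Finset.sum_add_distrib]
  refine Finset.sum_congr rfl fun t ht => ?_
  have hth : t ≤ h := by simp only [Finset.mem_range] at ht; omega
  obtain ⟨h1, h2⟩ := hb t hth
  simp only [Nat.min_def, Nat.max_def] at h1 h2
  split_ifs at h1 h2 <;> omega

/-- Forward chaining. -/
lemma FT (h s : ℕ) : ∀ (m : ℕ) (K : ℕ → ℕ → ℕ), (∀ c ≤ m, ValidK h s (K c)) →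
    ∀ H₀ : ℕ → ℕ, SetCDF h s H₀ → Fits h H₀ (K 0) →
    ∃ Hs : ℕ → ℕ → ℕ, Hs 0 = H₀ ∧ (∀ c ≤ m, SetCDF h s (Hs c) ∧ Fits h (Hs c) (K c)) ∧
      (∑ c ∈ Finset.range m, dd h (Hs c) (Hs (c+1))) + dd h (Hs m) (K m)
        ≤ dd h H₀ (K 0) + ∑ c ∈ Finset.range m, dd h (K c) (K (c+1)) := by
  intro m
  induction m with
  | zero =>
    intro K hK H₀ hH₀ hfit
    exact ⟨fun _ => H₀, rfl, fun c hc => by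
      interval_cases c
      exact ⟨hH₀, hfit⟩, by simp⟩
  | succ m ih =>
    intro K hK H₀ hH₀ hfit
    obtain ⟨hK1a, hK1b, hK1c⟩ := hK 1 (by omega)
    obtain ⟨hH₀a, hH₀b, hH₀c, hH₀d⟩ := hH₀
    obtain ⟨H₁, hH₁0, hH₁m, hH₁l, hH₁h, hH₁f, hH₁btw⟩ :=
      SL h s (K 1) H₀ hK1a hK1b hK1c hH₀a hH₀c hH₀d
    obtain ⟨Hs', hHs'0, hHs'prop, hHs'sum⟩ := ih (fun c => K (c+1))
      (fun c hc => hK (c+1) (by omega)) H₁ ⟨hH₁0, hH₁m, hH₁l, hH₁h⟩ hH₁f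
    refine ⟨fun c => Nat.rec H₀ (fun c _ => Hs' c) c, rfl, ?_, ?_⟩
    · intro c hc
      match c with
      | 0 => exact ⟨⟨hH₀a, hH₀b, hH₀c, hH₀d⟩, hfit⟩
      | Nat.succ c => exact hHs'prop c (by omega)
    · have hkey : dd h H₀ H₁ + dd h H₁ (K 1) ≤ dd h H₀ (K 0) + dd h (K 0) (K 1) := by
        have h1 : dd h H₀ H₁ + dd h H₁ (K 1) = dd h H₀ (K 1) := by
          apply dd_between
          intro t ht
          have := hH₁btw t ht
          omega
        rw [h1]
        exact dd_triangle h H₀ (K 0) (K 1)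
      have hS : (∑ c ∈ Finset.range m, dd h (Hs' c) (Hs' (c+1)))
          + dd h (Hs' m) (K (m+1))
          ≤ dd h H₁ (K 1) + ∑ c ∈ Finset.range m, dd h (K (c+1)) (K (c+2)) :=
        hHs'sum
      have hL1 : (∑ c ∈ Finset.range (m+1),
            dd h ((fun c => Nat.rec H₀ (fun c _ => Hs' c) c : ℕ → ℕ → ℕ) c)
                 ((fun c => Nat.rec H₀ (fun c _ => Hs' c) c : ℕ → ℕ → ℕ) (c+1)))
          = dd h H₀ H₁ + ∑ c ∈ Finset.range m, dd h (Hs' c) (Hs' (c+1)) := by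
        rw [Finset.sum_range_succ']
        show (∑ i ∈ Finset.range m, dd h (Hs' i) (Hs' (i+1))) + dd h H₀ (Hs' 0)
            = dd h H₀ H₁ + ∑ c ∈ Finset.range m, dd h (Hs' c) (Hs' (c+1))
        rw [hHs'0]
        exact Nat.add_comm _ _
      have hR1 : (∑ c ∈ Finset.range (m+1), dd h (K c) (K (c+1)))
          = dd h (K 0) (K 1) + ∑ c ∈ Finset.range m, dd h (K (c+1)) (K (c+2)) := by
        rw [Finset.sum_range_succ']
        exact Nat.add_comm _ _
      rw [hL1, hR1]
      have hL2 : dd h ((fun c => Nat.rec H₀ (fun c _ => Hs' c) c : ℕ → ℕ → ℕ) (m+1))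
          (K (m+1)) = dd h (Hs' m) (K (m+1)) := rfl
      rw [hL2]
      omega


lemma dd_add_le (h : ℕ) (f1 g1 f2 g2 : ℕ → ℕ) :
    dd h (fun t => f1 t + g1 t) (fun t => f2 t + g2 t) ≤ dd h f1 f2 + dd h g1 g2 := by
  unfold dd
  rw [← Finset.sum_add_distrib]
  refine Finset.sum_le_sum fun t _ => ?_
  push_cast
  omega

lemma dd_congr {h : ℕ} {f g f' g' : ℕ → ℕ} (hf : ∀ t ≤ h, f t = f' t)
    (hg : ∀ t ≤ h, g t = g' t) : dd h f g = dd h f' g' := by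
  unfold dd
  refine Finset.sum_congr rfl fun t ht => ?_
  simp only [Finset.mem_range] at ht
  rw [hf t (by omega), hg t (by omega)]

lemma colSupp_subset_range {h w : ℕ} (Ω : Finset (Fin h × Fin w)) (c : ℕ) :
    colSupp Ω c ⊆ Finset.range h := by
  intro r hr
  simp only [colSupp, Finset.mem_image] at hr
  obtain ⟨q, _, rfl⟩ := hr
  simp [q.1.isLt]

lemma mem_colSupp_self {h w : ℕ} {Ω : Finset (Fin h × Fin w)} {q : Fin h × Fin w}
    (hq : q ∈ Ω) : (q.1 : ℕ) ∈ colSupp Ω (q.2 : ℕ) := by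
  simp only [colSupp, Finset.mem_image]
  exact ⟨q, Finset.mem_filter.mpr ⟨hq, rfl⟩, rfl⟩

end Stmt10

open Finset Stmt10 in
theorem stmt10 (h w k₁ k₂ B₁ B₂ : ℕ) (hd₁ : w ∣ k₁) (hd₂ : w ∣ k₂)
    (hh : (k₁ + k₂) / w ≤ h)
    (Ω₁ Ω₂ : Finset (Fin h × Fin w))
    (hΩ₁ : Ω₁ ∈ cemdModel h w (k₁ / w) B₁)
    (hΩ₂ : Ω₂ ∈ cemdModel h w (k₂ / w) B₂) :
    ∃ Γ ∈ cemdModel h w ((k₁ + k₂) / w) (B₁ + B₂), Ω₁ ∪ Ω₂ ⊆ Γ := by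
  classical
  rcases Nat.eq_zero_or_pos w with hw0 | hw
  · subst hw0
    refine ⟨∅, ⟨fun c hc => absurd hc (by omega), ?_⟩, ?_⟩
    · show suppEMD (∅ : Finset (Fin h × Fin 0)) ≤ B₁ + B₂
      unfold suppEMD
      simp
    · intro q _
      exact q.2.elim0
  -- main case
  obtain ⟨hcol1, hemd1⟩ := hΩ₁
  obtain ⟨hcol2, hemd2⟩ := hΩ₂
  set s₁ := k₁ / w with hs₁
  set s₂ := k₂ / w with hs₂
  set s := s₁ + s₂ with hs
  have hsw : (k₁ + k₂) / w = s := by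
    obtain ⟨m₁, rfl⟩ := hd₁
    obtain ⟨m₂, rfl⟩ := hd₂
    rw [hs, hs₁, hs₂, ← Nat.mul_add]
    rw [Nat.mul_div_cancel_left _ hw, Nat.mul_div_cancel_left _ hw,
      Nat.mul_div_cancel_left _ hw]
  have hsh : s ≤ h := by rw [hsw] at hh; exact hh
  set X : ℕ → Finset ℕ := fun c => colSupp Ω₁ c with hX
  set Y : ℕ → Finset ℕ := fun c => colSupp Ω₂ c with hY
  have hXr : ∀ c, X c ⊆ Finset.range h := fun c => colSupp_subset_range Ω₁ c
  have hYr : ∀ c, Y c ⊆ Finset.range h := fun c => colSupp_subset_range Ω₂ c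
  set K : ℕ → ℕ → ℕ := fun c t => cnt (X c) t + cnt (Y c) t with hK
  have hvalid : ∀ c < w, ValidK h s (K c) := by
    intro c hc
    refine ⟨?_, ?_, ?_⟩
    · simp only [hK, cnt_zero]
    · intro t
      exact Nat.add_le_add (cnt_mono _ (by omega)) (cnt_mono _ (by omega))
    · simp only [hK]
      rw [cnt_eq_card (X c) (hXr c) (le_refl h), cnt_eq_card (Y c) (hYr c) (le_refl h)]
      rw [hcol1 c hc, hcol2 c hc]
  -- reference set CDF
  have hrefSL : ∀ c < w, ∃ H : ℕ → ℕ, SetCDF h s H ∧ Fits h H (K c) ∧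
      True := by
    intro c hc
    obtain ⟨hv1, hv2, hv3⟩ := hvalid c hc
    obtain ⟨H, h1, h2, h3, h4, h5, _⟩ := SL h s (K c) (fun t => min t s)
      hv1 hv2 hv3 (by simp) (fun t => by show min (t+1) s ≤ min t s + 1; omega)
      (by show min h s = s; omega)
    exact ⟨H, ⟨h1, h2, h3, h4⟩, h5, trivial⟩
  set Sa : Set ℕ := {d | ∃ H, SetCDF h s H ∧ Fits h H (K 0) ∧ d = dd h H (K 0)} with hSa
  set Sb : Set ℕ := {d | ∃ H, SetCDF h s H ∧ Fits h H (K (w-1)) ∧ d = dd h H (K (w-1))}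
    with hSb
  have hSane : Sa.Nonempty := by
    obtain ⟨H, h1, h2, _⟩ := hrefSL 0 hw
    exact ⟨_, H, h1, h2, rfl⟩
  have hSbne : Sb.Nonempty := by
    obtain ⟨H, h1, h2, _⟩ := hrefSL (w-1) (by omega)
    exact ⟨_, H, h1, h2, rfl⟩
  obtain ⟨Ha, hHaSet, hHaFit, hHaEq⟩ := Nat.sInf_mem hSane
  obtain ⟨Hb, hHbSet, hHbFit, hHbEq⟩ := Nat.sInf_mem hSbne
  -- obtain the final family Hfin
  have hmain : ∃ Hfin : ℕ → ℕ → ℕ,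
      (∀ c ≤ w - 1, SetCDF h s (Hfin c) ∧ Fits h (Hfin c) (K c)) ∧
      (∑ c ∈ Finset.range (w-1), dd h (Hfin c) (Hfin (c+1)))
        ≤ ∑ c ∈ Finset.range (w-1), dd h (K c) (K (c+1)) := by
    by_cases hab : sInf Sa ≤ sInf Sb
    · obtain ⟨Hs, _, hprop, hsum⟩ := FT h s (w-1) K
        (fun c hc => hvalid c (by omega)) Ha hHaSet hHaFit
      refine ⟨Hs, hprop, ?_⟩
      have hbmem : dd h (Hs (w-1)) (K (w-1)) ∈ Sb := by
        obtain ⟨h1, h2⟩ := hprop (w-1) (le_refl _)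
        exact ⟨Hs (w-1), h1, h2, rfl⟩
      have hble := Nat.sInf_le hbmem
      omega
    · set K' : ℕ → ℕ → ℕ := fun c => K (w-1-c) with hK'
      have hvalid' : ∀ c ≤ w - 1, ValidK h s (K' c) := by
        intro c hc
        exact hvalid (w-1-c) (by omega)
      obtain ⟨Hs, _, hprop, hsum⟩ := FT h s (w-1) K' hvalid' Hb hHbSet hHbFit
      refine ⟨fun c => Hs (w-1-c), ?_, ?_⟩
      · intro c hc
        have := hprop (w-1-c) (by omega)
        rwa [show K' (w-1-c) = K c from by
          show K (w-1-(w-1-c)) = K c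
          rw [show w-1-(w-1-c) = c by omega]] at this
      · have hamem : dd h (Hs (w-1)) (K' (w-1)) ∈ Sa := by
          obtain ⟨h1, h2⟩ := hprop (w-1) (le_refl _)
          refine ⟨Hs (w-1), h1, ?_, ?_⟩
          · rwa [show K' (w-1) = K 0 from by
              show K (w-1-(w-1)) = K 0
              rw [show w-1-(w-1) = 0 by omega]] at h2
          · rw [show K' (w-1) = K 0 from by
              show K (w-1-(w-1)) = K 0
              rw [show w-1-(w-1) = 0 by omega]]
        have hale := Nat.sInf_le hamem
        have hrev1 : (∑ c ∈ Finset.range (w-1), dd h (Hs (w-1-c)) (Hs (w-1-(c+1))))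
            = ∑ c ∈ Finset.range (w-1), dd h (Hs c) (Hs (c+1)) := by
          refine Finset.sum_nbij' (fun c => w-2-c) (fun c => w-2-c) ?_ ?_ ?_ ?_ ?_
          · intro c hc
            simp only [Finset.mem_range] at *
            omega
          · intro c hc
            simp only [Finset.mem_range] at *
            omega
          · intro c hc
            simp only [Finset.mem_range] at hc
            show w - 2 - (w - 2 - c) = c
            omega
          · intro c hc
            simp only [Finset.mem_range] at hc
            show w - 2 - (w - 2 - c) = c
            omega
          · intro c hc
            simp only [Finset.mem_range] at hc
            rw [dd_symm]
            show dd h (Hs (w - 1 - (c+1))) (Hs (w - 1 - c))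
                = dd h (Hs (w - 2 - c)) (Hs (w - 2 - c + 1))
            rw [show w - 1 - (c+1) = w - 2 - c by omega,
              show w - 1 - c = w - 2 - c + 1 by omega]
        have hrev2 : (∑ c ∈ Finset.range (w-1), dd h (K' c) (K' (c+1)))
            = ∑ c ∈ Finset.range (w-1), dd h (K c) (K (c+1)) := by
          refine Finset.sum_nbij' (fun c => w-2-c) (fun c => w-2-c) ?_ ?_ ?_ ?_ ?_
          · intro c hc
            simp only [Finset.mem_range] at *
            omega
          · intro c hc
            simp only [Finset.mem_range] at *
            omega
          · intro c hc
            simp only [Finset.mem_range] at hc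
            show w - 2 - (w - 2 - c) = c
            omega
          · intro c hc
            simp only [Finset.mem_range] at hc
            show w - 2 - (w - 2 - c) = c
            omega
          · intro c hc
            simp only [Finset.mem_range] at hc
            rw [dd_symm]
            show dd h (K (w - 1 - (c+1))) (K (w - 1 - c))
                = dd h (K (w - 2 - c)) (K (w - 2 - c + 1))
            rw [show w - 1 - (c+1) = w - 2 - c by omega,
              show w - 1 - c = w - 2 - c + 1 by omega]
        rw [show (∑ c ∈ Finset.range (w-1), dd h ((fun c => Hs (w-1-c)) c)
              ((fun c => Hs (w-1-c)) (c+1)))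
            = ∑ c ∈ Finset.range (w-1), dd h (Hs (w-1-c)) (Hs (w-1-(c+1))) from rfl]
        rw [hrev1]
        rw [hrev2] at hsum
        have hb' : dd h Hb (K' 0) = sInf Sb := by
          rw [show K' 0 = K (w-1) from rfl]
          omega
        omega
  obtain ⟨Hfin, hprop, hsum⟩ := hmain
  -- build the sets
  set T : ℕ → Finset ℕ := fun c => (Finset.range h).filter
    (fun r => Hfin c r < Hfin c (r+1)) with hT
  have hTsub : ∀ c, T c ⊆ Finset.range h := fun c => Finset.filter_subset _ _
  have hcntT : ∀ c ≤ w - 1, ∀ t ≤ h, cnt (T c) t = Hfin c t := by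
    intro c hc
    obtain ⟨⟨hc0, hcm, hcl, hch⟩, _⟩ := hprop c hc
    intro t
    induction t with
    | zero => intro _; rw [cnt_zero, hc0]
    | succ t iht =>
      intro ht
      rw [cnt_succ, iht (by omega)]
      have hmem : t ∈ T c ↔ (t < h ∧ Hfin c t < Hfin c (t+1)) := by
        simp [hT]
      by_cases hlt : Hfin c t < Hfin c (t+1)
      · rw [if_pos (hmem.mpr ⟨by omega, hlt⟩)]
        have := hcl t
        omega
      · rw [if_neg (fun hcon => hlt (hmem.mp hcon).2)]
        have := hcm t
        omega
  have hcardT : ∀ c ≤ w - 1, (T c).card = s := by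
    intro c hc
    obtain ⟨⟨hc0, hcm, hcl, hch⟩, _⟩ := hprop c hc
    rw [← cnt_eq_card (T c) (hTsub c) (le_refl h)]
    rw [hcntT c hc h (le_refl h), hch]
  have hXT : ∀ c < w, X c ⊆ T c := by
    intro c hc r hr
    have hrh : r < h := by
      have := hXr c hr; simp only [Finset.mem_range] at this; exact this
    have hjump : K c r < K c (r+1) := by
      simp only [hK]
      rw [cnt_succ (X c) r, if_pos hr]
      have := cnt_mono (Y c) (show r ≤ r + 1 by omega)
      omega
    obtain ⟨_, hfit⟩ := hprop c (by omega)
    have := hfit r hrh hjump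
    simp only [hT, Finset.mem_filter, Finset.mem_range]
    exact ⟨hrh, this⟩
  have hYT : ∀ c < w, Y c ⊆ T c := by
    intro c hc r hr
    have hrh : r < h := by
      have := hYr c hr; simp only [Finset.mem_range] at this; exact this
    have hjump : K c r < K c (r+1) := by
      simp only [hK]
      rw [cnt_succ (Y c) r, if_pos hr]
      have := cnt_mono (X c) (show r ≤ r + 1 by omega)
      omega
    obtain ⟨_, hfit⟩ := hprop c (by omega)
    have := hfit r hrh hjump
    simp only [hT, Finset.mem_filter, Finset.mem_range]
    exact ⟨hrh, this⟩
  set Γ : Finset (Fin h × Fin w) := Finset.univ.filter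
    (fun q => (q.1 : ℕ) ∈ T (q.2 : ℕ)) with hΓ
  have hcolΓ : ∀ c < w, colSupp Γ c = T c := by
    intro c hc
    ext r
    constructor
    · intro hr
      rw [hΓ] at hr
      simp only [colSupp, Finset.mem_image, Finset.mem_filter, Finset.mem_univ,
        true_and] at hr
      obtain ⟨q, ⟨hqT, hqc⟩, rfl⟩ := hr
      rwa [hqc] at hqT
    · intro hr
      have hrh : r < h := by
        have := hTsub c hr; simp only [Finset.mem_range] at this; exact this
      rw [hΓ]
      simp only [colSupp, Finset.mem_image, Finset.mem_filter, Finset.mem_univ,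
        true_and]
      refine ⟨(⟨r, hrh⟩, ⟨c, hc⟩), ⟨?_, rfl⟩, rfl⟩
      simpa using hr
  refine ⟨Γ, ⟨?_, ?_⟩, ?_⟩
  · intro c hc
    rw [hcolΓ c hc, hsw]
    exact hcardT c (by omega)
  · -- suppEMD bound
    have e1 : suppEMD Γ = ∑ c ∈ Finset.range (w-1), dd h (Hfin c) (Hfin (c+1)) := by
      unfold suppEMD
      refine Finset.sum_congr rfl fun c hcr => ?_
      simp only [Finset.mem_range] at hcr
      have hc1 : c < w := by omega
      have hc2 : c + 1 < w := by omega
      rw [hcolΓ c hc1, hcolΓ (c+1) hc2]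
      rw [natEMD_eq_dd (hTsub c) (hTsub (c+1))
        (by rw [hcardT c (by omega), hcardT (c+1) (by omega)])]
      exact dd_congr (hcntT c (by omega)) (hcntT (c+1) (by omega))
    have e2 : suppEMD Ω₁ = ∑ c ∈ Finset.range (w-1), dd h (cnt (X c)) (cnt (X (c+1))) := by
      unfold suppEMD
      refine Finset.sum_congr rfl fun c hcr => ?_
      simp only [Finset.mem_range] at hcr
      exact natEMD_eq_dd (hXr c) (hXr (c+1))
        (by rw [hcol1 c (by omega), hcol1 (c+1) (by omega)])
    have e3 : suppEMD Ω₂ = ∑ c ∈ Finset.range (w-1), dd h (cnt (Y c)) (cnt (Y (c+1))) := by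
      unfold suppEMD
      refine Finset.sum_congr rfl fun c hcr => ?_
      simp only [Finset.mem_range] at hcr
      exact natEMD_eq_dd (hYr c) (hYr (c+1))
        (by rw [hcol2 c (by omega), hcol2 (c+1) (by omega)])
    have e4 : (∑ c ∈ Finset.range (w-1), dd h (K c) (K (c+1)))
        ≤ (∑ c ∈ Finset.range (w-1), dd h (cnt (X c)) (cnt (X (c+1))))
          + ∑ c ∈ Finset.range (w-1), dd h (cnt (Y c)) (cnt (Y (c+1))) := by
      rw [← Finset.sum_add_distrib]
      refine Finset.sum_le_sum fun c _ => ?_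
      exact dd_add_le h (cnt (X c)) (cnt (Y c)) (cnt (X (c+1))) (cnt (Y (c+1)))
    rw [e1]
    rw [e2] at hemd1
    rw [e3] at hemd2
    omega
  · intro q hq
    have hqT : (q.1 : ℕ) ∈ T (q.2 : ℕ) := by
      rcases Finset.mem_union.mp hq with hq1 | hq2
      · exact hXT (q.2 : ℕ) q.2.isLt (mem_colSupp_self hq1)
      · exact hYT (q.2 : ℕ) q.2.isLt (mem_colSupp_self hq2)
    rw [hΓ]
    exact Finset.mem_filter.mpr ⟨Finset.mem_univ _, hqT⟩
end
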